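/- arXiv:2312.02639 — 2 statements merged into one kernel-verified Lean document; each statement's English description precedes it below -/
import Mathlib

section
/- Let G be a non-empty finite simple graph whose minimum degree is at least 2. Assume that for every vertex v of G of degree 2 there exists a vertex a satisfying: (1) a ∉ N_G[v]; (2) N_G(v) ≠ N_G(a); (3) for every vertex u ∈ N_G(v) of degree 2, a ∉ N_G(u). Then the dominance complex D(G) is 1-connected (path-connected with trivial fundamental group). -/
open SimpleGraph

/-- An abstract simplicial complex on the underlying vertex set `V`. -/
structure Cplx (V : Type) where
  faces : Finset V → Prop
  down_closed : ∀ ⦃σ τ : Finset V⦄, σ ⊆ τ → faces τ → faces σ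

/-- The dominance complex of a graph: the faces are the subsets of the vertex set
whose complement is a dominating set. -/
def domCpx {V : Type} [Fintype V] [DecidableEq V] (G : SimpleGraph V) : Cplx V where
  faces σ := ∀ v : V, ∃ w : V, w ∉ σ ∧ (w = v ∨ G.Adj w v)
  down_closed := by
    intro σ τ hst h v
    obtain ⟨w, hw, h2⟩ := h v
    exact ⟨w, fun hc => hw (hst hc), h2⟩

open Classical in
/-- The geometric realization of a simplicial complex, as a subspace of `V → ℝ`. -/
def Cplx.space {V : Type} [Fintype V] (K : Cplx V) : Type :=
  {f : V → ℝ // (∑ v, f v = 1) ∧ (∀ v, 0 ≤ f v) ∧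
    K.faces (Finset.univ.filter fun v => f v ≠ 0)}

instance {V : Type} [Fintype V] (K : Cplx V) : TopologicalSpace K.space :=
  instTopologicalSpaceSubtype

/-- The closed neighborhood of a vertex. -/
def closedNbhd {V : Type} (G : SimpleGraph V) (v : V) : Set V := {u | u = v ∨ G.Adj v u}

attribute [local instance] Path.Homotopic.setoid

namespace DomAux

variable {V : Type} [Fintype V] [DecidableEq V]
variable (G : SimpleGraph V) [DecidableRel G.Adj]

/-- closed neighborhood finset -/
def cnf (u : V) : Finset V := insert u (G.neighborFinset u)

lemma card_cnf (u : V) : (cnf G u).card = G.degree u + 1 := by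
  rw [cnf, Finset.card_insert_of_notMem (by simp), SimpleGraph.card_neighborFinset_eq_degree]

lemma face_of_forall (σ : Finset V) (hf : ∀ u : V, ¬ cnf G u ⊆ σ) :
    (domCpx G).faces σ := by
  intro u
  obtain ⟨w, hw1, hw2⟩ := Finset.not_subset.mp (hf u)
  rcases Finset.mem_insert.mp hw1 with h | h
  · exact ⟨w, hw2, Or.inl h⟩
  · exact ⟨w, hw2, Or.inr (G.adj_symm ((SimpleGraph.mem_neighborFinset G u w).mp h))⟩

lemma not_face_iff (σ : Finset V) :
    ¬ (domCpx G).faces σ ↔ ∃ u : V, cnf G u ⊆ σ := by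
  constructor
  · intro hn
    by_contra hc
    push_neg at hc
    exact hn (face_of_forall G σ hc)
  · rintro ⟨u, hu⟩ hf
    obtain ⟨w, hw1, hw2⟩ := hf u
    apply hw1
    apply hu
    rcases hw2 with h | h
    · simp [cnf, h]
    · simp [cnf, (SimpleGraph.mem_neighborFinset G u w), G.adj_symm h]

variable [Nonempty V]

lemma deg_ge (hmin : 2 ≤ G.minDegree) (u : V) : 2 ≤ G.degree u :=
  le_trans hmin (G.minDegree_le_degree u)

lemma face_of_card_le (hmin : 2 ≤ G.minDegree) (σ : Finset V) (hcard : σ.card ≤ 2) :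
    (domCpx G).faces σ := by
  apply face_of_forall
  intro u hsub
  have := Finset.card_le_card hsub
  rw [card_cnf] at this
  have := deg_ge G hmin u
  omega

lemma card_triple_le (a b c : V) : ({a, b, c} : Finset V).card ≤ 3 := by
  apply le_trans (Finset.card_insert_le _ _)
  have := Finset.card_insert_le b ({c} : Finset V)
  simp at this ⊢
  omega

/-- The key combinatorial lemma: a non-face triple can be coned off. -/
lemma key (hmin : 2 ≤ G.minDegree)
    (h : ∀ v : V, G.degree v = 2 → ∃ a : V,
      a ∉ closedNbhd G v ∧ G.neighborSet v ≠ G.neighborSet a ∧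
        ∀ u : V, G.Adj v u → G.degree u = 2 → ¬ G.Adj u a)
    (a b c : V) (hn : ¬ (domCpx G).faces {a, b, c}) :
    ∃ x : V, ∀ y z : V, y ∈ ({a, b, c} : Finset V) → z ∈ ({a, b, c} : Finset V) →
      (domCpx G).faces {y, z, x} := by
  set σ : Finset V := {a, b, c} with hσ
  obtain ⟨u, hu⟩ := (not_face_iff G σ).mp hn
  have huσ : u ∈ σ := hu (by simp [cnf])
  have hnfu : G.neighborFinset u ⊆ σ.erase u := by
    intro w hw
    refine Finset.mem_erase.mpr ⟨?_, hu (by simp [cnf, hw])⟩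
    intro hwu; subst hwu
    exact (G.irrefl ((SimpleGraph.mem_neighborFinset _ _ _).mp hw))
  have hσ3 : σ.card = 3 := by
    have h1 : 3 ≤ σ.card := by
      have := Finset.card_le_card hu
      rw [card_cnf] at this
      have := deg_ge G hmin u
      omega
    have h2 := card_triple_le a b c
    rw [← hσ] at h2
    omega
  have herase : (σ.erase u).card = 2 := by
    rw [Finset.card_erase_of_mem huσ, hσ3]
  have hdegu : G.degree u = 2 := by
    have h1 := Finset.card_le_card hnfu
    rw [SimpleGraph.card_neighborFinset_eq_degree] at h1
    have := deg_ge G hmin u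
    omega
  have hnfeq : G.neighborFinset u = σ.erase u := by
    apply Finset.eq_of_subset_of_card_le hnfu
    rw [herase, SimpleGraph.card_neighborFinset_eq_degree, hdegu]
  obtain ⟨x, hx1, hx2, hx3⟩ := h u hdegu
  have hxu : x ≠ u := fun hc => hx1 (Or.inl hc)
  have hxadj : ¬ G.Adj u x := fun hc => hx1 (Or.inr hc)
  have hcnfeq : cnf G u = σ := by
    apply Finset.eq_of_subset_of_card_le hu
    rw [card_cnf, hdegu, hσ3]
  have hxσ : x ∉ σ := by
    intro hc
    rw [← hcnfeq, cnf, Finset.mem_insert] at hc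
    rcases hc with hc | hc
    · exact hxu hc
    · exact hxadj ((SimpleGraph.mem_neighborFinset G u x).mp hc)
  refine ⟨x, fun y z hy hz => ?_⟩
  apply face_of_forall
  intro w hw
  -- w's closed neighborhood sits inside {y, z, x}
  have hwT : w ∈ ({y, z, x} : Finset V) := hw (by simp [cnf])
  have hnfw : G.neighborFinset w ⊆ ({y, z, x} : Finset V) := fun t ht => hw (by simp [cnf, ht])
  have hwnot : w ∉ G.neighborFinset w := by simp
  have hdegw : G.degree w = 2 := by
    have hsub2 : G.neighborFinset w ⊆ ({y, z, x} : Finset V).erase w :=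
      fun t ht => Finset.mem_erase.mpr ⟨fun hc => hwnot (hc ▸ ht), hnfw ht⟩
    have h1 := Finset.card_le_card hsub2
    have h2 : (({y, z, x} : Finset V).erase w).card ≤ 2 := by
      have := Finset.card_erase_of_mem hwT
      have := card_triple_le y z x
      omega
    rw [SimpleGraph.card_neighborFinset_eq_degree] at h1
    have := deg_ge G hmin w
    omega
  by_cases hwx : w = x
  · -- then N(x) ⊆ {y,z} ⊆ σ, u ∉ N(x), so N(x) = N(u), contradiction with hx2
    subst hwx
    have hnfx : G.neighborFinset w ⊆ σ.erase u := by
      intro t ht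
      have htT : t ∈ ({y, z, w} : Finset V) := hnfw ht
      have htx : t ≠ w := fun hc => hwnot (hc ▸ ht)
      have htσ : t ∈ σ := by
        rcases Finset.mem_insert.mp htT with hc | hc
        · exact hc ▸ hy
        rcases Finset.mem_insert.mp hc with hc2 | hc2
        · exact hc2 ▸ hz
        · exact absurd (Finset.mem_singleton.mp hc2) htx
      refine Finset.mem_erase.mpr ⟨fun hc => ?_, htσ⟩
      subst hc
      exact hxadj (G.adj_symm ((SimpleGraph.mem_neighborFinset _ _ _).mp ht))
    have heq2 : G.neighborFinset w = σ.erase u := by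
      apply Finset.eq_of_subset_of_card_le hnfx
      rw [herase, SimpleGraph.card_neighborFinset_eq_degree, hdegw]
    apply hx2
    have heq3 : G.neighborFinset u = G.neighborFinset w := by rw [hnfeq, heq2]
    apply Set.toFinset_inj.mp
    rw [← SimpleGraph.neighborFinset_def, ← SimpleGraph.neighborFinset_def]
    exact heq3
  · -- w ∈ σ
    have hwσ : w ∈ σ := by
      rcases Finset.mem_insert.mp hwT with hc | hc
      · exact hc ▸ hy
      rcases Finset.mem_insert.mp hc with hc2 | hc2
      · exact hc2 ▸ hz
      · exact absurd (Finset.mem_singleton.mp hc2) hwx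
    by_cases hwu : w = u
    · subst hwu
      have hsub : σ.erase w ⊆ ({y, z} : Finset V) := by
        intro t ht
        have htT : t ∈ ({y, z, x} : Finset V) := hnfw (by rw [hnfeq]; exact ht)
        have htσ : t ∈ σ := Finset.mem_of_mem_erase ht
        have htx : t ≠ x := fun hc => hxσ (hc ▸ htσ)
        rcases Finset.mem_insert.mp htT with hc | hc
        · simp [hc]
        rcases Finset.mem_insert.mp hc with hc2 | hc2
        · simp [hc2]
        · exact absurd (Finset.mem_singleton.mp hc2) htx
      have huyz : w ∈ ({y, z} : Finset V) := by
        rcases Finset.mem_insert.mp hwT with hc | hc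
        · simp [hc]
        rcases Finset.mem_insert.mp hc with hc2 | hc2
        · simp [hc2]
        · exact absurd (Finset.mem_singleton.mp hc2) hwx
      have hins : insert w (σ.erase w) ⊆ ({y, z} : Finset V) :=
        Finset.insert_subset huyz hsub
      have hcard : (insert w (σ.erase w)).card = 3 := by
        rw [Finset.insert_erase huσ, hσ3]
      have hle2 : ({y, z} : Finset V).card ≤ 2 := by
        apply le_trans (Finset.card_insert_le _ _); simp
      have := Finset.card_le_card hins
      omega
    · -- w ∈ σ, w ≠ u: then u ∈ N(w); if x ∈ N(w) contradiction with hx3;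
      -- else N(w) ⊆ {y,z}\{w} too small
      have hadjuw : G.Adj u w := by
        have : w ∈ G.neighborFinset u := by
          rw [hnfeq]; exact Finset.mem_erase.mpr ⟨hwu, hwσ⟩
        exact (SimpleGraph.mem_neighborFinset G u w).mp this
      have hxnfw : x ∉ G.neighborFinset w := by
        intro hc
        exact hx3 w hadjuw hdegw ((SimpleGraph.mem_neighborFinset G w x).mp hc)
      have hsub : G.neighborFinset w ⊆ (({y, z, x} : Finset V).erase x).erase w := by
        intro t ht
        refine Finset.mem_erase.mpr ⟨fun hc => hwnot (hc ▸ ht), ?_⟩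
        refine Finset.mem_erase.mpr ⟨fun hc => hxnfw (hc ▸ ht), hnfw ht⟩
      have h1 := Finset.card_le_card hsub
      have hxT : x ∈ ({y, z, x} : Finset V) := by simp
      have hwT' : w ∈ (({y, z, x} : Finset V).erase x) :=
        Finset.mem_erase.mpr ⟨hwx, hwT⟩
      have h2 := Finset.card_erase_of_mem hxT
      have h3 := Finset.card_erase_of_mem hwT'
      have h4 := card_triple_le y z x
      rw [SimpleGraph.card_neighborFinset_eq_degree, hdegw] at h1
      omega

end DomAux


namespace DomAux

noncomputable section

variable {V : Type} [Fintype V] [DecidableEq V] [Nonempty V]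
variable (G : SimpleGraph V) [DecidableRel G.Adj]

open Classical in
def supp (f : (domCpx G).space) : Finset V := Finset.univ.filter fun v => f.1 v ≠ 0

lemma face_supp (f : (domCpx G).space) : (domCpx G).faces (supp G f) := f.2.2.2

lemma mem_supp_iff {f : (domCpx G).space} {v : V} : v ∈ supp G f ↔ f.1 v ≠ 0 := by
  classical
  simp [supp]

lemma supp_exists (f : (domCpx G).space) : ∃ v, f.1 v ≠ 0 := by
  by_contra hc
  push_neg at hc
  have := f.2.1
  rw [Finset.sum_congr rfl (fun v _ => hc v)] at this
  simp at this

/-- Build an element of the realization. -/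
def mk' (g : V → ℝ) (h1 : ∑ v, g v = 1) (h2 : ∀ v, 0 ≤ g v) (σ : Finset V)
    (hface : (domCpx G).faces σ) (hsub : ∀ v, g v ≠ 0 → v ∈ σ) : (domCpx G).space :=
  ⟨g, h1, h2, (domCpx G).down_closed
    (fun v hv => hsub v (by classical simpa using (Finset.mem_filter.mp hv).2)) hface⟩

@[simp] lemma mk'_coe (g : V → ℝ) (h1) (h2) (σ : Finset V) (hface) (hsub) :
    (mk' G g h1 h2 σ hface hsub).1 = g := rfl

variable (hmin : 2 ≤ G.minDegree)

/-- The vertex point δ_v. -/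
def vert (v : V) : (domCpx G).space :=
  mk' G (fun w => if w = v then 1 else 0) (by simp) (by intro w; show (0:ℝ) ≤ (if w = v then 1 else 0); split <;> norm_num)
    {v} (face_of_card_le G hmin {v} (by simp))
    (by intro w hw; dsimp at hw; simp only [Finset.mem_singleton]; by_contra hc; simp [hc] at hw)

lemma vert_coe (v w : V) : (vert G hmin v).1 w = if w = v then 1 else 0 := rfl

lemma vert_self (v : V) : (vert G hmin v).1 v = 1 := by simp [vert_coe]

/-- Linear mix. -/
def mix2 (f g : V → ℝ) (t : ℝ) : V → ℝ := fun w => (1 - t) * f w + t * g w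

lemma mix2_sum {f g : V → ℝ} (hf : ∑ v, f v = 1) (hg : ∑ v, g v = 1) (t : ℝ) :
    ∑ v, mix2 f g t v = 1 := by
  simp only [mix2]
  rw [Finset.sum_add_distrib, ← Finset.mul_sum, ← Finset.mul_sum, hf, hg]
  ring

lemma mix2_nonneg {f g : V → ℝ} (hf : ∀ v, 0 ≤ f v) (hg : ∀ v, 0 ≤ g v)
    {t : ℝ} (h0 : 0 ≤ t) (h1 : t ≤ 1) (v : V) : 0 ≤ mix2 f g t v :=
  add_nonneg (mul_nonneg (by linarith) (hf v)) (mul_nonneg h0 (hg v))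

lemma mix2_ne {f g : V → ℝ} (hf : ∀ v, 0 ≤ f v) (hg : ∀ v, 0 ≤ g v)
    {t : ℝ} (h0 : 0 ≤ t) (h1 : t ≤ 1) {v : V} (hne : mix2 f g t v ≠ 0) :
    f v ≠ 0 ∨ g v ≠ 0 := by
  by_contra hc
  push_neg at hc
  exact hne (by simp [mix2, hc.1, hc.2])

lemma mix2_zero (f g : V → ℝ) : mix2 f g 0 = f := by funext w; simp [mix2]

lemma mix2_one (f g : V → ℝ) : mix2 f g 1 = g := by funext w; simp [mix2]

open unitInterval

/-- The straight-line segment between two points whose supports lie in a common face. -/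
def seg (f g : (domCpx G).space) (sig : Finset V) (hface : (domCpx G).faces sig)
    (hf : ∀ w, f.1 w ≠ 0 → w ∈ sig) (hg : ∀ w, g.1 w ≠ 0 → w ∈ sig) : Path f g where
  toFun t := mk' G (mix2 f.1 g.1 t.1) (mix2_sum f.2.1 g.2.1 t.1)
    (mix2_nonneg f.2.2.1 g.2.2.1 t.2.1 t.2.2) sig hface
    (fun w hw => (mix2_ne f.2.2.1 g.2.2.1 t.2.1 t.2.2 hw).elim (hf w) (hg w))
  continuous_toFun := by
    apply Continuous.subtype_mk
    apply continuous_pi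
    intro w
    exact (((continuous_const.sub continuous_subtype_val).mul continuous_const).add
      (continuous_subtype_val.mul continuous_const))
  source' := Subtype.ext (by simp [mix2_zero])
  target' := Subtype.ext (by simp [mix2_one])

lemma seg_coe (f g : (domCpx G).space) (sig : Finset V) (hface) (hf) (hg) (t : I) :
    ((seg G f g sig hface hf hg) t).1 = mix2 f.1 g.1 t.1 := rfl

/-- Master lemma: if all points of two paths lie in a subset of the realization that is
star-shaped (in the strong sense below) around a point `c`, the paths are homotopic. -/
lemma homotopic_of_star (S : Set (V → ℝ)) (c : (domCpx G).space) (hc : c.1 ∈ S)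
    (hstar : ∀ f : (domCpx G).space, f.1 ∈ S → ∀ t : ℝ, 0 ≤ t → t ≤ 1 →
      ((domCpx G).faces (Finset.univ.filter fun w => mix2 f.1 c.1 t w ≠ 0)) ∧
        mix2 f.1 c.1 t ∈ S)
    {a b : (domCpx G).space} (p q : Path a b)
    (hp : ∀ s, (p s).1 ∈ S) (hq : ∀ s, (q s).1 ∈ S) : p.Homotopic q := by
  let T := {f : (domCpx G).space // f.1 ∈ S}
  let cT : T := ⟨c, hc⟩
  let mixT : I × T → T := fun z =>
    ⟨⟨mix2 z.2.1.1 c.1 z.1.1, mix2_sum z.2.1.2.1 c.2.1 z.1.1,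
        mix2_nonneg z.2.1.2.2.1 c.2.2.1 z.1.2.1 z.1.2.2,
        (hstar z.2.1 z.2.2 z.1.1 z.1.2.1 z.1.2.2).1⟩,
      (hstar z.2.1 z.2.2 z.1.1 z.1.2.1 z.1.2.2).2⟩
  have hcont : Continuous mixT := by
    apply Continuous.subtype_mk
    apply Continuous.subtype_mk
    apply continuous_pi
    intro w
    have h1 : Continuous fun z : I × T => (z.1 : ℝ) :=
      continuous_subtype_val.comp continuous_fst
    have h2 : Continuous fun z : I × T => z.2.1.1 w :=
      (continuous_apply w).comp
        (continuous_subtype_val.comp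
          ((continuous_subtype_val (p := fun f : (domCpx G).space => f.1 ∈ S)).comp continuous_snd))
    exact ((continuous_const.sub h1).mul h2).add (h1.mul continuous_const)
  have H : ContinuousMap.Homotopy (ContinuousMap.id T) (ContinuousMap.const T cT) :=
    { toFun := mixT
      continuous_toFun := hcont
      map_zero_left := fun f => by
        apply Subtype.ext; apply Subtype.ext
        show mix2 f.1.1 c.1 ((0 : I) : ℝ) = f.1.1
        rw [Set.Icc.coe_zero, mix2_zero]
      map_one_left := fun f => by
        apply Subtype.ext; apply Subtype.ext
        show mix2 f.1.1 c.1 ((1 : I) : ℝ) = c.1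
        rw [Set.Icc.coe_one, mix2_one] }
  haveI : ContractibleSpace T := (contractible_iff_id_nullhomotopic T).mpr ⟨cT, ⟨H⟩⟩
  haveI : SimplyConnectedSpace T := inferInstance
  have ha : a.1 ∈ S := by have := hp 0; rwa [p.source] at this
  have hb : b.1 ∈ S := by have := hp 1; rwa [p.target] at this
  let pT : Path (⟨a, ha⟩ : T) ⟨b, hb⟩ :=
    { toFun := fun s => ⟨p s, hp s⟩
      continuous_toFun := p.continuous.subtype_mk _
      source' := Subtype.ext p.source
      target' := Subtype.ext p.target }
  let qT : Path (⟨a, ha⟩ : T) ⟨b, hb⟩ :=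
    { toFun := fun s => ⟨q s, hq s⟩
      continuous_toFun := q.continuous.subtype_mk _
      source' := Subtype.ext q.source
      target' := Subtype.ext q.target }
  have hh := SimplyConnectedSpace.paths_homotopic pT qT
  have hmap := hh.map (⟨Subtype.val, continuous_subtype_val⟩ : C(T, (domCpx G).space))
  have e1 : pT.map continuous_subtype_val = p := by ext s; rfl
  have e2 : qT.map continuous_subtype_val = q := by ext s; rfl
  rwa [show (⟨Subtype.val, continuous_subtype_val⟩ : C(T, (domCpx G).space)).continuous
        = continuous_subtype_val from rfl, e1, e2] at hmap

section GenPath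
open unitInterval

variable {X : Type*} [TopologicalSpace X]

def affI (u v : I) (s : I) : I :=
  ⟨(1 - s.1) * u.1 + s.1 * v.1, by
    constructor
    · nlinarith [s.2.1, s.2.2, u.2.1, v.2.1]
    · nlinarith [s.2.1, s.2.2, u.2.2, v.2.2]⟩

lemma affI_zero (u v : I) : affI u v 0 = u := Subtype.ext (by simp [affI])

lemma affI_one (u v : I) : affI u v 1 = v := Subtype.ext (by simp [affI])

lemma affI_self (u s : I) : affI u u s = u := Subtype.ext (by simp [affI]; ring)

lemma affI_continuous (u v : I) : Continuous (affI u v) := by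
  apply Continuous.subtype_mk
  exact ((continuous_const.sub continuous_subtype_val).mul continuous_const).add
    (continuous_subtype_val.mul continuous_const)

lemma affI_le (u v s : I) (huv : u ≤ v) : u ≤ affI u v s ∧ affI u v s ≤ v := by
  have h1 := s.2.1; have h2 := s.2.2
  have h3 : (u : ℝ) ≤ v := huv
  constructor
  · rw [← Subtype.coe_le_coe]; show (u:ℝ) ≤ (1 - s.1) * u.1 + s.1 * v.1; nlinarith
  · rw [← Subtype.coe_le_coe]; show (1 - s.1) * u.1 + s.1 * v.1 ≤ (v:ℝ); nlinarith

/-- The affine subpath of a path. -/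
def subP {a b : X} (p : Path a b) (u v : I) : Path (p u) (p v) where
  toFun s := p (affI u v s)
  continuous_toFun := p.continuous.comp (affI_continuous u v)
  source' := congrArg p (affI_zero u v)
  target' := congrArg p (affI_one u v)

lemma subP_coe {a b : X} (p : Path a b) (u v s : I) : subP p u v s = p (affI u v s) := rfl

lemma subP_self {a b : X} (p : Path a b) (u : I) : subP p u u = Path.refl (p u) := by
  ext s
  rw [subP_coe, affI_self]
  rfl

attribute [local instance] Path.Homotopic.setoid

/-- Splitting a subpath at an intermediate time, up to homotopy. -/
lemma subP_split {a b : X} (p : Path a b) (u v w : I) (h1 : u ≤ v) (h2 : v ≤ w) :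
    (subP p u w).Homotopic ((subP p u v).trans (subP p v w)) := by
  by_cases hdeg : (u : ℝ) = (w : ℝ)
  · have huv : u = v := le_antisymm h1 (by

      rw [← Subtype.coe_le_coe]
      have : (v:ℝ) ≤ w := h2
      rw [← hdeg] at this
      exact this)
    have huw : u = w := Subtype.ext hdeg
    subst huv
    rw [← huw, subP_self]
    exact (Path.Homotopic.refl _).trans ⟨(Path.Homotopy.transRefl (Path.refl (p u))).symm⟩
  · have hlt : (u : ℝ) < w := lt_of_le_of_ne (le_trans h1 h2) hdeg
    have hne : (w : ℝ) - u ≠ 0 := by linarith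
    set lin : I → ℝ := fun s => if (s : ℝ) ≤ 1/2 then u + 2*s*(v-u) else v + (2*s-1)*(w-v)
      with hlin
    have hlinmem : ∀ s : I, (u:ℝ) ≤ lin s ∧ lin s ≤ w := by
      intro s
      have hs1 := s.2.1; have hs2 := s.2.2
      have hc1 : (u:ℝ) ≤ v := h1
      have hc2 : (v:ℝ) ≤ w := h2
      rw [hlin]
      dsimp only
      split_ifs with hs
      · constructor <;> nlinarith
      · push_neg at hs
        constructor <;> nlinarith
    have hlincont : Continuous lin := by
      rw [hlin]
      apply Continuous.if_le
      · exact (continuous_const.add (((continuous_const.mul continuous_subtype_val).mul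
          continuous_const)))
      · exact (continuous_const.add ((((continuous_const.mul continuous_subtype_val).sub
          continuous_const).mul continuous_const)))
      · exact continuous_subtype_val
      · exact continuous_const
      · intro s hs
        rw [hs]; ring
    set φ : I → I := fun s => ⟨(lin s - u) / (w - u), by
      constructor
      · apply div_nonneg _ (by linarith)
        have := (hlinmem s).1; linarith
      · rw [div_le_one (by linarith)]
        have := (hlinmem s).2; linarith⟩ with hφ
    have hφcont : Continuous φ := by
      apply Continuous.subtype_mk
      exact (hlincont.sub continuous_const).div_const _
    have hφ0 : φ 0 = 0 := by
      apply Subtype.ext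
      rw [hφ]
      show ((lin 0 - u) / (w - u) : ℝ) = 0
      have : lin 0 = u := by rw [hlin]; norm_num
      rw [this]; simp
    have hφ1 : φ 1 = 1 := by
      apply Subtype.ext
      rw [hφ]
      show ((lin 1 - u) / (w - u) : ℝ) = 1
      have : lin 1 = w := by rw [hlin]; norm_num
      rw [this]
      field_simp
    have heq : (subP p u v).trans (subP p v w) = (subP p u w).reparam φ hφcont hφ0 hφ1 := by
      ext s
      rw [Path.trans_apply]
      have hrep : ((subP p u w).reparam φ hφcont hφ0 hφ1) s = p (affI u w (φ s)) := rfl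
      rw [hrep]
      split_ifs with hs
      · show p (affI u v ⟨2 * s, _⟩) = _
        apply congrArg p
        apply Subtype.ext
        show (1 - 2*(s:ℝ)) * u + 2*s*v = (1 - (φ s : ℝ)) * u + (φ s : ℝ) * w
        have h1' : (φ s : ℝ) = (lin s - u) / (w - u) := rfl
        have h2' : lin s = u + 2*s*(v-u) := by rw [hlin]; dsimp only; rw [if_pos hs]
        rw [h1', h2']
        field_simp
        ring
      · show p (affI v w ⟨2 * s - 1, _⟩) = _
        apply congrArg p
        apply Subtype.ext
        show (1 - (2*(s:ℝ)-1)) * v + (2*s-1)*w = (1 - (φ s : ℝ)) * u + (φ s : ℝ) * w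
        have h1' : (φ s : ℝ) = (lin s - u) / (w - u) := rfl
        have h2' : lin s = v + (2*s-1)*(w-v) := by rw [hlin]; dsimp only; rw [if_neg hs]
        rw [h1', h2']
        field_simp
        ring
    rw [heq]
    exact ⟨Path.Homotopy.reparam (subP p u w) φ hφcont hφ0 hφ1⟩

end GenPath

section Apply
open unitInterval

variable {V : Type} [Fintype V] [DecidableEq V] [Nonempty V]
variable (G : SimpleGraph V) [DecidableRel G.Adj] (hmin : 2 ≤ G.minDegree)

lemma mix2_ne_at {f g : V → ℝ} {v : V} (hfpos : ∀ w, 0 ≤ f w) (hgpos : ∀ w, 0 ≤ g w)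
    (hfv : f v ≠ 0) (hgv : g v ≠ 0) {t : ℝ} (h0 : 0 ≤ t) (h1 : t ≤ 1) :
    mix2 f g t v ≠ 0 := by
  intro hc
  have hf := hfpos v; have hg := hgpos v
  have hsum : (1 - t) * f v + t * g v = 0 := hc
  have hn1 : 0 ≤ (1 - t) * f v := mul_nonneg (by linarith) hf
  have hn2 : 0 ≤ t * g v := mul_nonneg h0 hg
  have e1 : (1 - t) * f v = 0 := by linarith
  have e2 : t * g v = 0 := by linarith
  rcases mul_eq_zero.mp e1 with h | h
  · have ht1 : t = 1 := by linarith
    rcases mul_eq_zero.mp e2 with h' | h'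
    · rw [ht1] at h'; norm_num at h'
    · exact hgv h'
  · exact hfv h

lemma vert_ne_self (v : V) : (vert G hmin v).1 v ≠ 0 := by
  rw [vert_self]; norm_num

lemma vert_support {v w : V} (hw : (vert G hmin v).1 w ≠ 0) : w = v := by
  by_contra hc
  rw [vert_coe] at hw
  simp [hc] at hw

/-- Segment from a point to a vertex of its support. -/
def segToVert (a : (domCpx G).space) (v : V) (ha : a.1 v ≠ 0) : Path a (vert G hmin v) :=
  seg G a (vert G hmin v) (supp G a) (face_supp G a) (fun _ hw => (mem_supp_iff G).mpr hw)
    (fun w hw => (mem_supp_iff G).mpr (by rw [vert_support G hmin hw]; exact ha))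

/-- Segment from a vertex of the support of `b` to `b`. -/
def segFromVert (v : V) (b : (domCpx G).space) (hb : b.1 v ≠ 0) : Path (vert G hmin v) b :=
  seg G (vert G hmin v) b (supp G b) (face_supp G b)
    (fun w hw => (mem_supp_iff G).mpr (by rw [vert_support G hmin hw]; exact hb))
    (fun _ hw => (mem_supp_iff G).mpr hw)

/-- The edge path between two vertex points. -/
def edgeP (v w : V) : Path (vert G hmin v) (vert G hmin w) :=
  seg G (vert G hmin v) (vert G hmin w) {v, w}
    (face_of_card_le G hmin _ (le_trans (Finset.card_insert_le _ _) (by simp)))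
    (fun u hu => by simp [vert_support G hmin hu])
    (fun u hu => by simp [vert_support G hmin hu])

lemma segToVert_ne (a : (domCpx G).space) (v : V) (ha : a.1 v ≠ 0) (s : I) :
    ((segToVert G hmin a v ha) s).1 v ≠ 0 := by
  rw [segToVert, seg_coe]
  exact mix2_ne_at a.2.2.1 (vert G hmin v).2.2.1 ha (vert_ne_self G hmin v) s.2.1 s.2.2

lemma segFromVert_ne (v : V) (b : (domCpx G).space) (hb : b.1 v ≠ 0) (s : I) :
    ((segFromVert G hmin v b hb) s).1 v ≠ 0 := by
  rw [segFromVert, seg_coe]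
  exact mix2_ne_at (vert G hmin v).2.2.1 b.2.2.1 (vert_ne_self G hmin v) hb s.2.1 s.2.2

attribute [local instance] Path.Homotopic.setoid

/-- A path living in the open star of `v` is homotopic to the two-leg path through `vert v`. -/
lemma piece_homotopic (v : V) {a b : (domCpx G).space} (p : Path a b)
    (hp : ∀ s, (p s).1 v ≠ 0) (ha : a.1 v ≠ 0) (hb : b.1 v ≠ 0) :
    p.Homotopic ((segToVert G hmin a v ha).trans (segFromVert G hmin v b hb)) := by
  apply homotopic_of_star G {g | g v ≠ 0} (vert G hmin v) (vert_ne_self G hmin v)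
  · intro f hf t h0 h1
    constructor
    · apply (domCpx G).down_closed _ (face_supp G f)
      intro w hw
      classical
      have hw' : mix2 f.1 (vert G hmin v).1 t w ≠ 0 := by simpa using (Finset.mem_filter.mp hw).2
      rcases mix2_ne f.2.2.1 (vert G hmin v).2.2.1 h0 h1 hw' with h | h
      · exact (mem_supp_iff G).mpr h
      · exact (mem_supp_iff G).mpr (by rw [vert_support G hmin h]; exact hf)
    · exact mix2_ne_at f.2.2.1 (vert G hmin v).2.2.1 hf (vert_ne_self G hmin v) h0 h1
  · exact hp
  · intro s
    have hmem : ((segToVert G hmin a v ha).trans (segFromVert G hmin v b hb)) s ∈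
        Set.range (segToVert G hmin a v ha) ∪ Set.range (segFromVert G hmin v b hb) := by
      rw [← Path.trans_range]
      exact Set.mem_range_self s
    rcases hmem with ⟨s', hs'⟩ | ⟨s', hs'⟩
    · rw [← hs']; exact segToVert_ne G hmin a v ha s'
    · rw [← hs']; exact segFromVert_ne G hmin v b hb s'

/-- Any two paths inside the simplex spanned by a face are homotopic. -/
lemma convex_homotopic (hm : 2 ≤ G.minDegree) (sig : Finset V) (hface : (domCpx G).faces sig)
    {a b : (domCpx G).space} (p q : Path a b)
    (hp : ∀ (s : I) (w : V), (p s).1 w ≠ 0 → w ∈ sig)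
    (hq : ∀ (s : I) (w : V), (q s).1 w ≠ 0 → w ∈ sig) : p.Homotopic q := by
  obtain ⟨v0, hv0⟩ := supp_exists G a
  have hv0sig : v0 ∈ sig := hp 0 v0 (by rw [p.source]; exact hv0)
  apply homotopic_of_star G {g | ∀ w, g w ≠ 0 → w ∈ sig} (vert G hm v0)
    (fun w hw => by rw [vert_support G hm hw]; exact hv0sig)
  · intro f hf t h0 h1
    constructor
    · apply (domCpx G).down_closed _ hface
      intro w hw
      classical
      have hw' : mix2 f.1 (vert G hm v0).1 t w ≠ 0 := by simpa using (Finset.mem_filter.mp hw).2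
      rcases mix2_ne f.2.2.1 (vert G hm v0).2.2.1 h0 h1 hw' with h | h
      · exact hf w h
      · rw [vert_support G hm h]; exact hv0sig
    · intro w hw
      rcases mix2_ne f.2.2.1 (vert G hm v0).2.2.1 h0 h1 hw with h | h
      · exact hf w h
      · rw [vert_support G hm h]; exact hv0sig
  · exact fun s => hp s
  · exact fun s => hq s

end Apply

section Grp

open CategoryTheory unitInterval

attribute [local instance] Path.Homotopic.setoid

variable {X : Type*} [TopologicalSpace X]

/-- Casting preserves homotopy of paths. -/
lemma cast_homotopic {a b a' b' : X} (P Q : Path a b) (hx : a' = a) (hy : b' = b)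
    (hPQ : P.Homotopic Q) : (P.cast hx hy).Homotopic (Q.cast hx hy) := by
  subst hx; subst hy
  have e1 : P.cast rfl rfl = P := by ext s; rw [Path.cast_coe]
  have e2 : Q.cast rfl rfl = Q := by ext s; rw [Path.cast_coe]
  rwa [e1, e2]

lemma cast_rfl_rfl {a b : X} (P : Path a b) : P.cast rfl rfl = P := by
  ext s; rw [Path.cast_coe]

variable {V : Type} [Fintype V] [DecidableEq V] [Nonempty V]
variable (G : SimpleGraph V) [DecidableRel G.Adj]

/-- An object of the fundamental groupoid of the realization. -/
abbrev FG (x : (domCpx G).space) : FundamentalGroupoid (domCpx G).space := ⟨x⟩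

/-- The homotopy class of a path, as a morphism of the fundamental groupoid. -/
def pq {x y : (domCpx G).space} (P : Path x y) : FG G x ⟶ FG G y := ⟦P⟧

lemma pq_comp {x y z : (domCpx G).space} (P : Path x y) (Q : Path y z) :
    pq G P ≫ pq G Q = pq G (P.trans Q) := rfl

lemma pq_eq_of_homotopic {x y : (domCpx G).space} {P Q : Path x y} (h : P.Homotopic Q) :
    pq G P = pq G Q := Quotient.sound h

lemma homotopic_of_pq_eq {x y : (domCpx G).space} {P Q : Path x y} (h : pq G P = pq G Q) :
    P.Homotopic Q := Quotient.exact h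

lemma pq_refl (x : (domCpx G).space) : pq G (Path.refl x) = 𝟙 (FG G x) := rfl

variable (hm : 2 ≤ G.minDegree)

/-- Edge morphism. -/
def EdQ (v w : V) : FG G (vert G hm v) ⟶ FG G (vert G hm w) := pq G (edgeP G hm v w)

lemma edgeP_self (v : V) : edgeP G hm v v = Path.refl (vert G hm v) := by
  ext s
  apply Subtype.ext
  have h1 : ((edgeP G hm v v) s).1 = mix2 (vert G hm v).1 (vert G hm v).1 s.1 := rfl
  have h2 : ((Path.refl (vert G hm v)) s).1 = (vert G hm v).1 := rfl
  rw [h1, h2]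
  funext w
  show (1 - (s:ℝ)) * (vert G hm v).1 w + s * (vert G hm v).1 w = (vert G hm v).1 w
  ring

lemma EdQ_self (v : V) : EdQ G hm v v = 𝟙 (FG G (vert G hm v)) := by
  rw [EdQ, edgeP_self, pq_refl]

lemma edgeP_support (v w : V) (s : I) (u : V) (hu : ((edgeP G hm v w) s).1 u ≠ 0) :
    u = v ∨ u = w := by
  rw [edgeP, seg_coe] at hu
  rcases mix2_ne (vert G hm v).2.2.1 (vert G hm w).2.2.1 s.2.1 s.2.2 hu with h | h
  · exact Or.inl (vert_support G hm h)
  · exact Or.inr (vert_support G hm h)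

lemma segToVert_support (a : (domCpx G).space) (v : V) (ha : a.1 v ≠ 0) (s : I) (u : V)
    (hu : ((segToVert G hm a v ha) s).1 u ≠ 0) : a.1 u ≠ 0 ∨ u = v := by
  rw [segToVert, seg_coe] at hu
  rcases mix2_ne a.2.2.1 (vert G hm v).2.2.1 s.2.1 s.2.2 hu with h | h
  · exact Or.inl h
  · exact Or.inr (vert_support G hm h)

lemma segFromVert_support (v : V) (b : (domCpx G).space) (hb : b.1 v ≠ 0) (s : I) (u : V)
    (hu : ((segFromVert G hm v b hb) s).1 u ≠ 0) : b.1 u ≠ 0 ∨ u = v := by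
  rw [segFromVert, seg_coe] at hu
  rcases mix2_ne (vert G hm v).2.2.1 b.2.2.1 s.2.1 s.2.2 hu with h | h
  · exact Or.inr (vert_support G hm h)
  · exact Or.inl h

/-- Triangle relation in the case of an actual face. -/
lemma triFace (a b c : V) (hface : (domCpx G).faces {a, b, c}) :
    EdQ G hm a b ≫ EdQ G hm b c = EdQ G hm a c := by
  rw [EdQ, EdQ, EdQ, pq_comp]
  apply pq_eq_of_homotopic
  apply convex_homotopic G hm {a, b, c} hface
  · intro s w hw
    have hmem : ((edgeP G hm a b).trans (edgeP G hm b c)) s ∈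
        Set.range (edgeP G hm a b) ∪ Set.range (edgeP G hm b c) := by
      rw [← Path.trans_range]; exact Set.mem_range_self s
    rcases hmem with ⟨s', hs'⟩ | ⟨s', hs'⟩
    · rw [← hs'] at hw
      rcases edgeP_support G hm a b s' w hw with h | h <;> simp [h]
    · rw [← hs'] at hw
      rcases edgeP_support G hm b c s' w hw with h | h <;> simp [h]
  · intro s w hw
    rcases edgeP_support G hm a c s w hw with h | h <;> simp [h]

lemma pair_card_le (a : V) (b : V) : ({a, b} : Finset V).card ≤ 2 :=
  le_trans (Finset.card_insert_le _ _) (by simp)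

/-- The full triangle relation. -/
lemma triangle
    (h : ∀ v : V, G.degree v = 2 → ∃ a : V,
      a ∉ closedNbhd G v ∧ G.neighborSet v ≠ G.neighborSet a ∧
        ∀ u : V, G.Adj v u → G.degree u = 2 → ¬ G.Adj u a)
    (a b c : V) : EdQ G hm a b ≫ EdQ G hm b c = EdQ G hm a c := by
  by_cases hface : (domCpx G).faces {a, b, c}
  · exact triFace G hm a b c hface
  · obtain ⟨x, hx⟩ := key G hm h a b c hface
    have hab : a ∈ ({a, b, c} : Finset V) := by simp
    have hbb : b ∈ ({a, b, c} : Finset V) := by simp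
    have hcc : c ∈ ({a, b, c} : Finset V) := by simp
    have f1 : (domCpx G).faces {a, x, b} := by
      have : ({a, x, b} : Finset V) = {a, b, x} := by ext u; simp; tauto
      rw [this]; exact hx a b hab hbb
    have f2 : (domCpx G).faces {b, x, c} := by
      have : ({b, x, c} : Finset V) = {b, c, x} := by ext u; simp; tauto
      rw [this]; exact hx b c hbb hcc
    have f3 : (domCpx G).faces {a, x, c} := by
      have : ({a, x, c} : Finset V) = {a, c, x} := by ext u; simp; tauto
      rw [this]; exact hx a c hab hcc
    have fxbx : (domCpx G).faces {x, b, x} := by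
      apply face_of_card_le G hm
      have : ({x, b, x} : Finset V) = {x, b} := by ext u; simp; tauto
      rw [this]; exact pair_card_le x b
    calc EdQ G hm a b ≫ EdQ G hm b c
        = (EdQ G hm a x ≫ EdQ G hm x b) ≫ (EdQ G hm b x ≫ EdQ G hm x c) := by
          rw [triFace G hm a x b f1, triFace G hm b x c f2]
      _ = EdQ G hm a x ≫ (EdQ G hm x b ≫ EdQ G hm b x) ≫ EdQ G hm x c := by
          simp only [Category.assoc]
      _ = EdQ G hm a x ≫ 𝟙 _ ≫ EdQ G hm x c := by
          rw [triFace G hm x b x fxbx, EdQ_self]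
      _ = EdQ G hm a x ≫ EdQ G hm x c := by rw [Category.id_comp]
      _ = EdQ G hm a c := triFace G hm a x c f3

/-- The chain of edge morphisms along consecutive vertices. -/
def chainE (v : ℕ → V) (k : ℕ) : (N : ℕ) → (FG G (vert G hm (v k)) ⟶ FG G (vert G hm (v (k + N))))
  | 0 => 𝟙 _
  | N + 1 => chainE v k N ≫ EdQ G hm (v (k + N)) (v (k + N + 1))

lemma chainE_collapse
    (h : ∀ v : V, G.degree v = 2 → ∃ a : V,
      a ∉ closedNbhd G v ∧ G.neighborSet v ≠ G.neighborSet a ∧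
        ∀ u : V, G.Adj v u → G.degree u = 2 → ¬ G.Adj u a)
    (v : ℕ → V) (k : ℕ) : ∀ N : ℕ, chainE G hm v k N = EdQ G hm (v k) (v (k + N))
  | 0 => (EdQ_self G hm (v k)).symm
  | N + 1 => by
    rw [chainE, chainE_collapse h v k N, triangle G hm h]
    rfl

/-- The two-leg path through a common point merges into an edge. -/
lemma twoLeg_EdQ (f : (domCpx G).space) (a b : V) (hfa : f.1 a ≠ 0) (hfb : f.1 b ≠ 0) :
    pq G (segFromVert G hm a f hfa) ≫ pq G (segToVert G hm f b hfb) = EdQ G hm a b := by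
  rw [pq_comp, EdQ]
  apply pq_eq_of_homotopic
  apply convex_homotopic G hm (supp G f) (face_supp G f)
  · intro s w hw
    have hmem : ((segFromVert G hm a f hfa).trans (segToVert G hm f b hfb)) s ∈
        Set.range (segFromVert G hm a f hfa) ∪ Set.range (segToVert G hm f b hfb) := by
      rw [← Path.trans_range]; exact Set.mem_range_self s
    rcases hmem with ⟨s', hs'⟩ | ⟨s', hs'⟩
    · rw [← hs'] at hw
      rcases segFromVert_support G hm a f hfa s' w hw with h | h
      · exact (mem_supp_iff G).mpr h
      · rw [h]; exact (mem_supp_iff G).mpr hfa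
    · rw [← hs'] at hw
      rcases segToVert_support G hm f b hfb s' w hw with h | h
      · exact (mem_supp_iff G).mpr h
      · rw [h]; exact (mem_supp_iff G).mpr hfb
  · intro s w hw
    rcases edgeP_support G hm a b s w hw with h | h
    · rw [h]; exact (mem_supp_iff G).mpr hfa
    · rw [h]; exact (mem_supp_iff G).mpr hfb

/-- The core subdivision lemma. -/
lemma core
    (h : ∀ v : V, G.degree v = 2 → ∃ a : V,
      a ∉ closedNbhd G v ∧ G.neighborSet v ≠ G.neighborSet a ∧
        ∀ u : V, G.Adj v u → G.degree u = 2 → ¬ G.Adj u a)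
    {x y : (domCpx G).space} (p : Path x y) (t : ℕ → I) (hmono : Monotone t) (v : ℕ → V)
    (HP : ∀ n : ℕ, ∀ s : I, t n ≤ s → s ≤ t (n + 1) → (p s).1 (v n) ≠ 0) :
    ∀ N k : ℕ,
      pq G (subP p (t k) (t (k + N + 1))) =
        pq G (segToVert G hm (p (t k)) (v k)
            (HP k (t k) le_rfl (hmono (Nat.le_succ k)))) ≫
          chainE G hm v k N ≫
          pq G (segFromVert G hm (v (k + N)) (p (t (k + N + 1)))
            (HP (k + N) (t (k + N + 1)) (hmono (Nat.le_succ (k + N))) le_rfl))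
  | 0, k => by
    rw [chainE, Category.id_comp, pq_comp]
    apply pq_eq_of_homotopic
    apply piece_homotopic G hm (v k)
    intro s
    rw [subP_coe]
    have hmem := affI_le (t k) (t (k + 1)) s (hmono (Nat.le_succ k))
    exact HP k _ hmem.1 hmem.2
  | N + 1, k => by
    show pq G (subP p (t k) (t (k + N + 2))) =
        pq G (segToVert G hm (p (t k)) (v k) (HP k (t k) le_rfl (hmono (Nat.le_succ k)))) ≫
          (chainE G hm v k N ≫ EdQ G hm (v (k + N)) (v (k + N + 1))) ≫
          pq G (segFromVert G hm (v (k + N + 1)) (p (t (k + N + 2)))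
            (HP (k + N + 1) (t (k + N + 2)) (hmono (Nat.le_succ (k + N + 1))) le_rfl))
    have hsplit := subP_split p (t k) (t (k + N + 1)) (t (k + N + 2))
      (hmono (by omega)) (hmono (by omega))
    have step1 : pq G (subP p (t k) (t (k + N + 2))) =
        pq G (subP p (t k) (t (k + N + 1))) ≫ pq G (subP p (t (k + N + 1)) (t (k + N + 2))) := by
      rw [pq_comp]
      exact pq_eq_of_homotopic G hsplit
    have step2 : pq G (subP p (t (k + N + 1)) (t (k + N + 2))) =
        pq G (segToVert G hm (p (t (k + N + 1))) (v (k + N + 1))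
            (HP (k + N + 1) (t (k + N + 1)) le_rfl (hmono (Nat.le_succ _)))) ≫
          pq G (segFromVert G hm (v (k + N + 1)) (p (t (k + N + 2)))
            (HP (k + N + 1) (t (k + N + 2)) (hmono (Nat.le_succ _)) le_rfl)) := by
      rw [pq_comp]
      apply pq_eq_of_homotopic
      apply piece_homotopic G hm (v (k + N + 1))
      intro s
      rw [subP_coe]
      have hmem := affI_le (t (k + N + 1)) (t (k + N + 2)) s (hmono (Nat.le_succ _))
      exact HP (k + N + 1) _ hmem.1 hmem.2
    rw [step1, step2, core h p t hmono v HP N k]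
    simp only [Category.assoc]
    congr 2
    rw [← Category.assoc, twoLeg_EdQ]


/-- Every loop in the realization is null-homotopic. -/
lemma loop_trivial (hm : 2 ≤ G.minDegree)
    (h : ∀ v : V, G.degree v = 2 → ∃ a : V,
      a ∉ closedNbhd G v ∧ G.neighborSet v ≠ G.neighborSet a ∧
        ∀ u : V, G.Adj v u → G.degree u = 2 → ¬ G.Adj u a)
    (x : (domCpx G).space) (γ : Path x x) : γ.Homotopic (Path.refl x) := by
  classical
  -- open star cover of the interval
  set c : V → Set I := fun w => γ ⁻¹' {f : (domCpx G).space | f.1 w ≠ 0} with hc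
  have hopen : ∀ w, IsOpen (c w) := by
    intro w
    have hcont : Continuous fun s : I => (γ s).1 w :=
      ((continuous_apply w).comp continuous_subtype_val).comp γ.continuous
    have : c w = (fun s : I => (γ s).1 w) ⁻¹' {r : ℝ | r ≠ 0} := rfl
    rw [this]
    exact isOpen_ne.preimage hcont
  have hcover : Set.univ ⊆ ⋃ w, c w := by
    intro s _
    obtain ⟨w, hw⟩ := supp_exists G (γ s)
    exact Set.mem_iUnion.mpr ⟨w, hw⟩
  obtain ⟨t, ht0, hmono, ⟨m, hm1⟩, hsub⟩ :=
    exists_monotone_Icc_subset_open_cover_unitInterval hopen hcover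
  choose v hv using hsub
  have HP : ∀ n : ℕ, ∀ s : I, t n ≤ s → s ≤ t (n + 1) → (γ s).1 (v n) ≠ 0 :=
    fun n s h1 h2 => hv n ⟨h1, h2⟩
  obtain ⟨N, hN⟩ : ∃ N : ℕ, max m 1 = N + 1 := ⟨max m 1 - 1, by omega⟩
  have htM : t (0 + N + 1) = 1 := by
    apply hm1
    omega
  have hx0 : γ (t 0) = x := by rw [ht0]; exact γ.source
  have hx1 : γ (t (0 + N + 1)) = x := by rw [htM]; exact γ.target
  have q1 : x.1 (v 0) ≠ 0 := by
    rw [← hx0]; exact HP 0 (t 0) le_rfl (hmono (Nat.le_succ 0))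
  have q2 : x.1 (v (0 + N)) ≠ 0 := by
    rw [← hx1]; exact HP (0 + N) (t (0 + N + 1)) (hmono (Nat.le_succ (0 + N))) le_rfl
  -- the core decomposition
  have hcore := core G hm h γ t hmono v HP N 0
  rw [chainE_collapse G hm h v 0 N] at hcore
  set A : Path (γ (t 0)) (vert G hm (v 0)) :=
    segToVert G hm (γ (t 0)) (v 0) (HP 0 (t 0) le_rfl (hmono (Nat.le_succ 0))) with hA
  set B : Path (vert G hm (v (0 + N))) (γ (t (0 + N + 1))) :=
    segFromVert G hm (v (0 + N)) (γ (t (0 + N + 1)))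
      (HP (0 + N) (t (0 + N + 1)) (hmono (Nat.le_succ (0 + N))) le_rfl) with hB
  set E : Path (vert G hm (v 0)) (vert G hm (v (0 + N))) := edgeP G hm (v 0) (v (0 + N)) with hE
  have hcore2 : pq G (subP γ (t 0) (t (0 + N + 1))) = pq G (A.trans (E.trans B)) := by
    rw [hcore, ← pq_comp, ← pq_comp]
    rfl
  have hηW : (subP γ (t 0) (t (0 + N + 1))).Homotopic (A.trans (E.trans B)) :=
    homotopic_of_pq_eq G hcore2
  have hWc := cast_homotopic _ _ hx0.symm hx1.symm hηW
  -- γ equals the casted subpath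
  have haff : ∀ s : I, affI (t 0) (t (0 + N + 1)) s = s := by
    intro s
    apply Subtype.ext
    have c0 : ((t 0 : I) : ℝ) = 0 := by rw [ht0]; rfl
    have c1 : ((t (0 + N + 1) : I) : ℝ) = 1 := by rw [htM]; rfl
    show (1 - (s : ℝ)) * (t 0 : I) + s * (t (0 + N + 1) : I) = s
    rw [c0, c1]
    ring
  have hγη : γ = (subP γ (t 0) (t (0 + N + 1))).cast hx0.symm hx1.symm := by
    ext s
    rw [Path.cast_coe, subP_coe, haff s]
  rw [← hγη] at hWc
  -- replace the endpoints of the casted two-leg path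
  set A' : Path x (vert G hm (v 0)) := segToVert G hm x (v 0) q1 with hA'
  set B' : Path (vert G hm (v (0 + N))) x := segFromVert G hm (v (0 + N)) x q2 with hB'
  have hval0 : (γ (t 0)).1 = x.1 := congrArg Subtype.val hx0
  have hval1 : (γ (t (0 + N + 1))).1 = x.1 := congrArg Subtype.val hx1
  have eA : A.cast hx0.symm rfl = A' := by
    ext s
    apply Subtype.ext
    show mix2 (γ (t 0)).1 (vert G hm (v 0)).1 s.1 = mix2 x.1 (vert G hm (v 0)).1 s.1
    rw [hval0]
  have eB : B.cast rfl hx1.symm = B' := by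
    ext s
    apply Subtype.ext
    show mix2 (vert G hm (v (0 + N))).1 (γ (t (0 + N + 1))).1 s.1
        = mix2 (vert G hm (v (0 + N))).1 x.1 s.1
    rw [hval1]
  have hWcast : (A.trans (E.trans B)).cast hx0.symm hx1.symm
      = A'.trans (E.trans B') := by
    rw [← eA, ← eB]
    rfl
  rw [hWcast] at hWc
  -- now kill the edge loop in the groupoid
  have hz : pq G (A'.trans (E.trans B')) = pq G A' ≫ EdQ G hm (v 0) (v (0 + N)) ≫ pq G B' := rfl
  have hBA : pq G B' ≫ pq G A' = EdQ G hm (v (0 + N)) (v 0) := twoLeg_EdQ G hm x _ _ q2 q1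
  have htri : EdQ G hm (v 0) (v (0 + N)) ≫ EdQ G hm (v (0 + N)) (v 0)
      = 𝟙 (FG G (vert G hm (v 0))) := by
    rw [triangle G hm h, EdQ_self]
  set z := pq G A' ≫ EdQ G hm (v 0) (v (0 + N)) ≫ pq G B' with hzdef
  have hzz : z ≫ z = z := by
    rw [hzdef]
    have e1 : (pq G A' ≫ EdQ G hm (v 0) (v (0 + N)) ≫ pq G B') ≫
        pq G A' ≫ EdQ G hm (v 0) (v (0 + N)) ≫ pq G B'
        = pq G A' ≫ EdQ G hm (v 0) (v (0 + N)) ≫ ((pq G B' ≫ pq G A') ≫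
            EdQ G hm (v 0) (v (0 + N))) ≫ pq G B' := by
      simp only [Category.assoc]
    rw [e1, hBA]
    have e2 : EdQ G hm (v (0 + N)) (v 0) ≫ EdQ G hm (v 0) (v (0 + N))
        = EdQ G hm (v (0 + N)) (v (0 + N)) := triangle G hm h _ _ _
    rw [e2, EdQ_self, Category.id_comp]
  have hz1 : z = 𝟙 (FG G x) := by
    have hstep : z = (z ≫ z) ≫ CategoryTheory.Groupoid.inv z := by
      rw [Category.assoc, CategoryTheory.Groupoid.comp_inv, Category.comp_id]
    rw [hstep, hzz, CategoryTheory.Groupoid.comp_inv]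
  have final : pq G γ = pq G (Path.refl x) := by
    rw [pq_eq_of_homotopic G hWc, hz, hz1, pq_refl]
  exact homotopic_of_pq_eq G final

/-- Any two paths with the same endpoints are homotopic. -/
lemma paths_all (hm : 2 ≤ G.minDegree)
    (h : ∀ v : V, G.degree v = 2 → ∃ a : V,
      a ∉ closedNbhd G v ∧ G.neighborSet v ≠ G.neighborSet a ∧
        ∀ u : V, G.Adj v u → G.degree u = 2 → ¬ G.Adj u a)
    {a b : (domCpx G).space} (p q : Path a b) : p.Homotopic q := by
  have h1 := loop_trivial G hm h a (p.trans q.symm)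
  have h2 := loop_trivial G hm h a (q.trans q.symm)
  have e1 : pq G p ≫ pq G q.symm = 𝟙 (FG G a) := by
    rw [pq_comp, pq_eq_of_homotopic G h1, pq_refl]
  have e2 : pq G q ≫ pq G q.symm = 𝟙 (FG G a) := by
    rw [pq_comp, pq_eq_of_homotopic G h2, pq_refl]
  apply homotopic_of_pq_eq G
  calc pq G p = pq G p ≫ 𝟙 _ := (Category.comp_id _).symm
    _ = pq G p ≫ (pq G q.symm ≫ CategoryTheory.Groupoid.inv (pq G q.symm)) := by
        rw [CategoryTheory.Groupoid.comp_inv]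
    _ = (pq G p ≫ pq G q.symm) ≫ CategoryTheory.Groupoid.inv (pq G q.symm) := by
        rw [Category.assoc]
    _ = (pq G q ≫ pq G q.symm) ≫ CategoryTheory.Groupoid.inv (pq G q.symm) := by
        rw [e1, e2]
    _ = pq G q ≫ (pq G q.symm ≫ CategoryTheory.Groupoid.inv (pq G q.symm)) := by
        rw [Category.assoc]
    _ = pq G q := by rw [CategoryTheory.Groupoid.comp_inv, Category.comp_id]

/-- The realization is path connected. -/
lemma pathConnected (hm : 2 ≤ G.minDegree) : PathConnectedSpace (domCpx G).space := by
  constructor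
  · exact ⟨vert G hm (Classical.arbitrary V)⟩
  · intro a b
    obtain ⟨va, hva⟩ := supp_exists G a
    obtain ⟨vb, hvb⟩ := supp_exists G b
    exact ⟨(segToVert G hm a va hva).trans
      ((edgeP G hm va vb).trans (segFromVert G hm vb b hvb))⟩

end Grp

end

end DomAux


/-- Theorem 5.8: let `G` be a non-empty graph of minimum degree at least `2` such that
every vertex `v` of degree `2` admits a vertex `a` with (1) `a ∉ N[v]`,
(2) `N(v) ≠ N(a)`, and (3) `a` is not adjacent to any degree-`2` neighbor of `v`.
Then the dominance complex of `G` is `1`-connected. -/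
theorem dominance_simplyConnected {V : Type} [Fintype V] [DecidableEq V] [Nonempty V]
    (G : SimpleGraph V) [DecidableRel G.Adj] (hmin : 2 ≤ G.minDegree)
    (h : ∀ v : V, G.degree v = 2 → ∃ a : V,
      a ∉ closedNbhd G v ∧ G.neighborSet v ≠ G.neighborSet a ∧
        ∀ u : V, G.Adj v u → G.degree u = 2 → ¬ G.Adj u a) :
    SimplyConnectedSpace (domCpx G).space := by
  classical
  rw [simply_connected_iff_paths_homotopic]
  constructor
  · exact DomAux.pathConnected G hmin
  · intro x y
    exact ⟨fun P Q => Quotient.inductionOn₂ P Q fun p q =>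
      Quotient.sound (DomAux.paths_all G hmin h p q)⟩
end

section
/- Let G be a finite simple graph with minimum degree k. Then the dominance complex D(G) is (k−2)-connected, i.e., π_i(D(G)) is trivial for all i with 0 ≤ i ≤ k−2. -/
open SimpleGraph

noncomputable section
namespace DomConn
open scoped ENNReal NNReal



open Metric Set

variable {α : Type*} [PseudoMetricSpace α] {E : Type*} [NormedAddCommGroup E]

/-- Lipschitz with some constant. -/
def Lip (f : α → E) : Prop := ∃ C : NNReal, LipschitzWith C f

/-- Lipschitz and bounded. -/
def LB (f : α → E) : Prop := Lip f ∧ ∃ A : ℝ, ∀ a, ‖f a‖ ≤ A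

theorem lip_of_dist {f : α → E} (C : ℝ) (hC : 0 ≤ C)
    (h : ∀ a b, dist (f a) (f b) ≤ C * dist a b) : Lip f :=
  ⟨⟨C, hC⟩, LipschitzWith.of_dist_le_mul h⟩

theorem Lip.dist_le {f : α → E} (h : Lip f) : ∃ C : ℝ, 0 ≤ C ∧
    ∀ a b, dist (f a) (f b) ≤ C * dist a b := by
  obtain ⟨C, hC⟩ := h
  exact ⟨C, C.2, fun a b => hC.dist_le_mul a b⟩

theorem Lip.const (c : E) : Lip (fun _ : α => c) :=
  ⟨0, LipschitzWith.const c⟩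

theorem Lip.continuous {f : α → E} (h : Lip f) : Continuous f := by
  obtain ⟨C, hC⟩ := h; exact hC.continuous

theorem Lip.comp {β : Type*} [PseudoMetricSpace β] {f : β → E} {g : α → β}
    (hf : Lip f) (hg : ∃ C : NNReal, LipschitzWith C g) : Lip (fun a => f (g a)) := by
  obtain ⟨C, hC⟩ := hf; obtain ⟨D, hD⟩ := hg
  exact ⟨C * D, hC.comp hD⟩

theorem Lip.add {f g : α → E} (hf : Lip f) (hg : Lip g) : Lip (fun a => f a + g a) := by
  obtain ⟨C, hC0, hC⟩ := hf.dist_le; obtain ⟨D, hD0, hD⟩ := hg.dist_le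
  refine lip_of_dist (C + D) (by linarith) fun a b => ?_
  calc dist (f a + g a) (f b + g b) ≤ dist (f a) (f b) + dist (g a) (g b) := dist_add_add_le _ _ _ _
  _ ≤ C * dist a b + D * dist a b := add_le_add (hC a b) (hD a b)
  _ = (C + D) * dist a b := by ring

theorem Lip.neg {f : α → E} (hf : Lip f) : Lip (fun a => -f a) := by
  obtain ⟨C, hC0, hC⟩ := hf.dist_le
  refine lip_of_dist C hC0 fun a b => ?_
  rw [dist_neg_neg]; exact hC a b

theorem Lip.sub {f g : α → E} (hf : Lip f) (hg : Lip g) : Lip (fun a => f a - g a) := by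
  simpa [sub_eq_add_neg] using hf.add hg.neg

theorem LB.lip {f : α → E} (h : LB f) : Lip f := h.1

theorem LB.bound {f : α → E} (h : LB f) : ∃ A : ℝ, 0 ≤ A ∧ ∀ a, ‖f a‖ ≤ A := by
  obtain ⟨A, hA⟩ := h.2
  exact ⟨max A 0, le_max_right _ _, fun a => le_trans (hA a) (le_max_left _ _)⟩

theorem LB.smul [NormedSpace ℝ E] {f : α → ℝ} {g : α → E} (hf : LB f) (hg : LB g) :
    LB (fun a => f a • g a) := by
  obtain ⟨A, hA0, hA⟩ := hf.bound
  obtain ⟨B, hB0, hB⟩ := hg.bound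
  obtain ⟨C, hC0, hC⟩ := hf.lip.dist_le
  obtain ⟨D, hD0, hD⟩ := hg.lip.dist_le
  constructor
  · refine lip_of_dist (A * D + C * B) (by positivity) fun a b => ?_
    have : f a • g a - f b • g b = f a • (g a - g b) + (f a - f b) • g b := by
      rw [smul_sub, sub_smul]; abel
    rw [dist_eq_norm, this]
    calc ‖f a • (g a - g b) + (f a - f b) • g b‖
        ≤ ‖f a • (g a - g b)‖ + ‖(f a - f b) • g b‖ := norm_add_le _ _
      _ = |f a| * ‖g a - g b‖ + |f a - f b| * ‖g b‖ := by
          rw [norm_smul, norm_smul]; simp [Real.norm_eq_abs]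
      _ ≤ A * (D * dist a b) + C * dist a b * B := by
          have h1 := hD a b; have h2 := hC a b
          rw [dist_eq_norm] at h1 h2
          have := hA a; have := hB b
          gcongr <;> first
            | exact hA a
            | exact hB b
            | simpa [Real.norm_eq_abs, dist_eq_norm] using h1
            | simpa [Real.norm_eq_abs, dist_eq_norm] using h2
      _ = (A * D + C * B) * dist a b := by ring
  · exact ⟨A * B, fun a => by
      rw [norm_smul]
      calc ‖f a‖ * ‖g a‖ ≤ A * B := by gcongr; exacts [hA a, hB a]⟩

theorem LB.mul {f g : α → ℝ} (hf : LB f) (hg : LB g) : LB (fun a => f a * g a) :=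
  hf.smul hg

theorem LB.const (c : E) : LB (fun _ : α => c) :=
  ⟨Lip.const c, ‖c‖, fun _ => le_refl _⟩

theorem LB.add {f g : α → E} (hf : LB f) (hg : LB g) : LB (fun a => f a + g a) := by
  obtain ⟨A, _, hA⟩ := hf.bound; obtain ⟨B, _, hB⟩ := hg.bound
  exact ⟨hf.lip.add hg.lip, A + B, fun a => le_trans (norm_add_le _ _) (add_le_add (hA a) (hB a))⟩

theorem LB.sub {f g : α → E} (hf : LB f) (hg : LB g) : LB (fun a => f a - g a) := by
  obtain ⟨A, _, hA⟩ := hf.bound; obtain ⟨B, _, hB⟩ := hg.bound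
  exact ⟨hf.lip.sub hg.lip, A + B, fun a => le_trans (norm_sub_le _ _) (add_le_add (hA a) (hB a))⟩

/-- coordinate evaluation is Lipschitz -/
theorem lip_eval {ι : Type*} [Fintype ι] (v : ι) : Lip (fun f : ι → ℝ => f v) :=
  lip_of_dist 1 zero_le_one fun a b => by
    simpa using dist_le_pi_dist a b v

theorem Lip.pi {ι : Type*} [Fintype ι] {F : α → ι → ℝ}
    (h : ∀ v, Lip (fun a => F a v)) : Lip F := by
  choose C hC0 hC using fun v => (h v).dist_le
  rcases isEmpty_or_nonempty ι with hι | hι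
  · exact lip_of_dist 0 le_rfl fun a b => by
      simp [dist_pi_le_iff le_rfl]
  obtain ⟨M, hM0, hM⟩ : ∃ M : ℝ, 0 ≤ M ∧ ∀ v, C v ≤ M := by
    obtain ⟨v₀, hv₀⟩ := Finset.exists_max_image Finset.univ C ⟨Classical.ofNonempty, Finset.mem_univ _⟩
    exact ⟨C v₀, hC0 v₀, fun v => hv₀.2 v (Finset.mem_univ v)⟩
  refine lip_of_dist M hM0 fun a b => ?_
  rw [dist_pi_le_iff (by positivity)]
  intro v
  exact le_trans (hC v a b) (by gcongr; exact hM v)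

theorem Lip.max {f g : α → ℝ} (hf : Lip f) (hg : Lip g) : Lip (fun a => max (f a) (g a)) := by
  obtain ⟨C, hC0, hC⟩ := hf.dist_le; obtain ⟨D, hD0, hD⟩ := hg.dist_le
  refine lip_of_dist (C + D) (by linarith) fun a b => ?_
  rw [Real.dist_eq]
  have h1 := hC a b; have h2 := hD a b
  rw [Real.dist_eq] at h1 h2
  have key := abs_max_sub_max_le_max (f a) (g a) (f b) (g b)
  have hd : (0:ℝ) ≤ dist a b := dist_nonneg
  refine le_trans key (max_le (le_trans h1 ?_) (le_trans h2 ?_)) <;> nlinarith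

theorem Lip.min {f g : α → ℝ} (hf : Lip f) (hg : Lip g) :
    Lip (fun a => Min.min (f a) (g a)) := by
  have h : ∀ a, Min.min (f a) (g a) = -Max.max (-f a) (-g a) := fun a => by
    rw [← min_neg_neg, neg_neg, neg_neg]
  simp only [h]
  exact (Lip.max hf.neg hg.neg).neg

theorem Lip.comp_LB {E₂ : Type*} [NormedAddCommGroup E₂] [Nonempty α]
    {f : E₂ → E} {g : α → E₂} (hf : Lip f) (hg : LB g) : LB (fun a => f (g a)) := by
  obtain ⟨C, hC0, hC⟩ := hf.dist_le
  obtain ⟨B, hB0, hB⟩ := hg.bound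
  obtain ⟨D, hD⟩ := hg.lip
  refine ⟨hf.comp ⟨D, hD⟩, ?_⟩
  set a₀ : α := Classical.ofNonempty
  refine ⟨‖f (g a₀)‖ + C * (2 * B), fun a => ?_⟩
  have h1 : ‖f (g a)‖ ≤ ‖f (g a₀)‖ + dist (f (g a)) (f (g a₀)) := by
    rw [dist_eq_norm]
    have := norm_add_le (f (g a) - f (g a₀)) (f (g a₀))
    simpa using this.trans (by rw [add_comm])
  have h2 : dist (g a) (g a₀) ≤ 2 * B := by
    rw [dist_eq_norm]
    calc ‖g a - g a₀‖ ≤ ‖g a‖ + ‖g a₀‖ := norm_sub_le _ _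
    _ ≤ B + B := add_le_add (hB a) (hB a₀)
    _ = 2 * B := by ring
  calc ‖f (g a)‖ ≤ ‖f (g a₀)‖ + dist (f (g a)) (f (g a₀)) := h1
  _ ≤ ‖f (g a₀)‖ + C * dist (g a) (g a₀) := by gcongr; exact hC _ _
  _ ≤ ‖f (g a₀)‖ + C * (2 * B) := by gcongr

theorem lip_invAbove {ε : ℝ} (hε : 0 < ε) : Lip (fun s : ℝ => (Max.max s ε)⁻¹) := by
  refine lip_of_dist (ε⁻¹ * ε⁻¹) (by positivity) fun a b => ?_
  have ha : ε ≤ Max.max a ε := le_max_right _ _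
  have hb : ε ≤ Max.max b ε := le_max_right _ _
  have ha0 : 0 < Max.max a ε := lt_of_lt_of_le hε ha
  have hb0 : 0 < Max.max b ε := lt_of_lt_of_le hε hb
  rw [Real.dist_eq, Real.dist_eq]
  have key : (Max.max a ε)⁻¹ - (Max.max b ε)⁻¹
      = (Max.max b ε - Max.max a ε) / (Max.max a ε * Max.max b ε) := by
    field_simp
  rw [key, abs_div, abs_of_pos (by positivity : (0:ℝ) < Max.max a ε * Max.max b ε)]
  have h1 : |Max.max b ε - Max.max a ε| ≤ |b - a| := by
    have := abs_max_sub_max_le_max b ε a ε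
    simpa using this.trans (by simp)
  have h2 : ε * ε ≤ Max.max a ε * Max.max b ε :=
    mul_le_mul ha hb (le_of_lt hε) (le_of_lt ha0)
  have h3 : |Max.max b ε - Max.max a ε| / (Max.max a ε * Max.max b ε) ≤ |b - a| / (ε * ε) :=
    div_le_div₀ (abs_nonneg _) h1 (by positivity) h2
  refine h3.trans (le_of_eq ?_)
  rw [abs_sub_comm]
  field_simp
  try ring

theorem invAbove_bound {ε s : ℝ} (hε : 0 < ε) : ‖(Max.max s ε)⁻¹‖ ≤ ε⁻¹ := by
  rw [Real.norm_eq_abs, abs_of_pos (by positivity)]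
  exact inv_anti₀ hε (le_max_right _ _)

theorem invAbove_eq {ε s : ℝ} (h : ε ≤ s) : (Max.max s ε)⁻¹ = s⁻¹ := by
  rw [max_eq_left h]

theorem Lip.finsetSum {ι : Type*} {s : Finset ι} {F : ι → α → ℝ}
    (h : ∀ v ∈ s, Lip (F v)) : Lip (fun a => ∑ v ∈ s, F v a) := by
  classical
  induction s using Finset.induction with
  | empty => simpa using Lip.const (0:ℝ)
  | insert _ _ hv ih =>
      rename_i b t
      simp only [Finset.sum_insert hv]
      exact (h b (Finset.mem_insert_self _ _)).add
        (ih fun v hvt => h v (Finset.mem_insert_of_mem hvt))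

theorem LB.finsetProd {ι : Type*} {s : Finset ι} {F : ι → α → ℝ}
    (h : ∀ v ∈ s, LB (F v)) : LB (fun a => ∏ v ∈ s, F v a) := by
  classical
  induction s using Finset.induction with
  | empty => simpa using LB.const (1:ℝ)
  | insert _ _ hv ih =>
      rename_i b t
      simp only [Finset.prod_insert hv]
      exact (h b (Finset.mem_insert_self _ _)).mul
        (ih fun v hvt => h v (Finset.mem_insert_of_mem hvt))

/-- Lipschitz approximation of a continuous function on a compact metric space. -/
theorem lip_approx {α : Type*} [MetricSpace α] [CompactSpace α] [Nonempty α]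
    (f : α → ℝ) (hf : Continuous f) {δ : ℝ} (hδ : 0 < δ) :
    ∃ g : α → ℝ, Lip g ∧ ∀ a, |g a - f a| ≤ δ := by
  obtain ⟨A, hA⟩ : ∃ A : ℝ, ∀ a, |f a| ≤ A := by
    obtain ⟨A, hA⟩ := (isCompact_range hf).isBounded.subset_closedBall 0
    exact ⟨A, fun a => by simpa [Real.dist_eq] using hA (mem_range_self a)⟩
  have hA0 : 0 ≤ A := le_trans (abs_nonneg _) (hA Classical.ofNonempty)
  obtain ⟨η, hη0, hη⟩ := Metric.uniformContinuous_iff.1 (CompactSpace.uniformContinuous_of_continuous hf) δ hδ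
  obtain ⟨m, hm⟩ := exists_nat_ge (2 * A / η)
  have hm0 : (0:ℝ) ≤ m := Nat.cast_nonneg m
  set g : α → ℝ := fun a => ⨅ a' : α, (f a' + m * dist a a') with hg
  have hbdd : ∀ a : α, BddBelow (range fun a' => f a' + m * dist a a') := by
    intro a
    refine ⟨-A, ?_⟩
    rintro y ⟨a', rfl⟩
    dsimp only
    have := (abs_le.1 (hA a')).1
    nlinarith [dist_nonneg (x := a) (y := a'), hm0]
  have hle : ∀ a, g a ≤ f a := fun a => by
    simpa using ciInf_le (hbdd a) a
  have hge : ∀ a, f a - δ ≤ g a := by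
    intro a
    refine le_ciInf fun a' => ?_
    rcases lt_or_ge (dist a a') η with h | h
    · have := le_of_lt (abs_lt.1 (by simpa [Real.dist_eq] using hη (by simpa [dist_comm] using h))).2
      nlinarith [dist_nonneg (x := a) (y := a'), hm0]
    · have h1 : 2 * A ≤ (m:ℝ) * dist a a' := by
        rw [div_le_iff₀ hη0] at hm
        nlinarith
      have := (abs_le.1 (hA a')).1
      have := (abs_le.1 (hA a)).2
      nlinarith
  refine ⟨g, ?_, fun a => abs_le.2 ⟨by linarith [hge a, hle a], by linarith [hle a, hge a]⟩⟩
  refine lip_of_dist m hm0 fun a b => ?_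
  have key : ∀ a b : α, g a ≤ g b + m * dist a b := by
    intro a b
    have : g a - m * dist a b ≤ g b := by
      refine le_ciInf fun a' => ?_
      have h1 : g a ≤ f a' + m * dist a a' := ciInf_le (hbdd a) a'
      have h2 : dist a a' ≤ dist a b + dist b a' := dist_triangle _ _ _
      nlinarith [hm0]
    linarith
  rw [Real.dist_eq, abs_le]
  constructor
  · nlinarith [key b a, dist_comm a b, dist_nonneg (x := a) (y := b)]
  · nlinarith [key a b, dist_nonneg (x := a) (y := b)]


/-! ### The complex-specific machinery -/

open Classical in
/-- the set of non-faces of `K`, as a `Finset`. -/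
def NF {V : Type} [Fintype V] [DecidableEq V] (K : Cplx V) : Finset (Finset V) :=
  Finset.univ.filter (fun τ => ¬ K.faces τ)

section CplxSec

variable {V : Type} [Fintype V] [DecidableEq V] (K : Cplx V)

/-- threshold function -/
def tK (f : V → ℝ) : ℝ := sSup ((fun τ : Finset V => sInf (f '' ↑τ)) '' ↑(NF K))

def gK (f : V → ℝ) : V → ℝ := fun v => Max.max (f v - tK K f) 0

def SK (f : V → ℝ) : ℝ := ∑ v, gK K f v

variable {K}

theorem mem_NF {τ : Finset V} : τ ∈ NF K ↔ ¬ K.faces τ := by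
  simp [NF]

theorem tset_fin (f : V → ℝ) :
    ((fun τ : Finset V => sInf (f '' ↑τ)) '' ↑(NF K)).Finite :=
  (Finset.finite_toSet _).image _

theorem le_tK {f : V → ℝ} {τ : Finset V} (hτ : τ ∈ NF K) : sInf (f '' ↑τ) ≤ tK K f :=
  le_csSup (tset_fin f).bddAbove (Set.mem_image_of_mem _ (by exact_mod_cast hτ))

theorem tK_le {f : V → ℝ} {c : ℝ} (hNF : (NF K).Nonempty)
    (h : ∀ τ ∈ NF K, sInf (f '' ↑τ) ≤ c) : tK K f ≤ c := by
  refine csSup_le ?_ ?_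
  · obtain ⟨τ, hτ⟩ := hNF
    exact ⟨_, Set.mem_image_of_mem _ (by exact_mod_cast hτ)⟩
  · rintro y ⟨τ, hτm, rfl⟩
    exact h τ (by exact_mod_cast hτm)

theorem tK_mem {f : V → ℝ} (hNF : (NF K).Nonempty) :
    ∃ τ ∈ NF K, tK K f = sInf (f '' ↑τ) := by
  have hne : ((fun τ : Finset V => sInf (f '' ↑τ)) '' ↑(NF K)).Nonempty := by
    obtain ⟨τ, hτ⟩ := hNF
    exact ⟨_, Set.mem_image_of_mem _ (by exact_mod_cast hτ)⟩
  obtain ⟨τ, hτm, h⟩ := hne.csSup_mem (tset_fin f)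
  exact ⟨τ, by exact_mod_cast hτm, h.symm⟩

theorem sInf_img_mem {f : V → ℝ} {τ : Finset V} (hτ : τ.Nonempty) :
    ∃ v ∈ τ, sInf (f '' ↑τ) = f v := by
  have hne : (f '' ↑τ).Nonempty := (Finset.coe_nonempty.2 hτ).image f
  have hmem := hne.csInf_mem ((Finset.finite_toSet τ).image f)
  obtain ⟨v, hv, heq⟩ := hmem
  exact ⟨v, hv, heq.symm⟩

theorem sInf_img_le {f : V → ℝ} {τ : Finset V} {v : V} (hv : v ∈ τ) :
    sInf (f '' ↑τ) ≤ f v :=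
  csInf_le ((Finset.finite_toSet τ).image f).bddBelow (Set.mem_image_of_mem f hv)

theorem le_sInf_img {f : V → ℝ} {τ : Finset V} {c : ℝ} (hτ : τ.Nonempty)
    (h : ∀ v ∈ τ, c ≤ f v) : c ≤ sInf (f '' ↑τ) := by
  refine le_csInf ((Finset.coe_nonempty.2 hτ).image f) ?_
  rintro y ⟨v, hv, rfl⟩
  exact h v hv

theorem lip_tK (hNF : (NF K).Nonempty) (hne : ∀ τ ∈ NF K, τ.Nonempty) :
    Lip (tK K) := by
  refine lip_of_dist 1 zero_le_one fun a b => ?_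
  have key : ∀ a b : V → ℝ, tK K a ≤ tK K b + dist a b := by
    intro a b
    refine tK_le hNF fun τ hτ => ?_
    obtain ⟨v, hv, hvb⟩ := sInf_img_mem (f := b) (hne τ hτ)
    have h1 : sInf (a '' ↑τ) ≤ a v := sInf_img_le hv
    have h2 : a v ≤ b v + dist a b := by
      have := dist_le_pi_dist a b v
      rw [Real.dist_eq] at this
      have := (abs_le.1 this).2
      linarith
    have h3 : sInf (b '' ↑τ) ≤ tK K b := le_tK hτ
    rw [hvb] at h3
    linarith
  rw [Real.dist_eq, abs_le]
  have d1 := key a b; have d2 := key b a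
  rw [dist_comm b a] at d2
  constructor <;> nlinarith [dist_nonneg (x := a) (y := b)]

theorem tK_nonneg (hNF : (NF K).Nonempty) (hne : ∀ τ ∈ NF K, τ.Nonempty)
    {f : V → ℝ} (hf : ∀ v, 0 ≤ f v) : 0 ≤ tK K f := by
  obtain ⟨τ, hτ⟩ := hNF
  exact le_trans (le_sInf_img (hne τ hτ) fun v _ => hf v) (le_tK hτ)

theorem tK_eq_zero (hNF : (NF K).Nonempty) (hne : ∀ τ ∈ NF K, τ.Nonempty)
    {f : V → ℝ} (h2 : ∀ v, 0 ≤ f v)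
    (h3 : K.faces (Finset.univ.filter fun v => f v ≠ 0)) : tK K f = 0 := by
  refine le_antisymm (tK_le hNF fun τ hτ => ?_) (tK_nonneg hNF hne h2)
  have : ∃ v ∈ τ, f v = 0 := by
    by_contra hcon
    push_neg at hcon
    have hsub : τ ⊆ Finset.univ.filter fun v => f v ≠ 0 := by
      intro v hv
      simp only [Finset.mem_filter, Finset.mem_univ, true_and]
      exact hcon v hv
    exact (mem_NF.1 hτ) (K.down_closed hsub h3)
  obtain ⟨v, hv, hfv⟩ := this
  calc sInf (f '' ↑τ) ≤ f v := sInf_img_le hv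
  _ = 0 := hfv

theorem face_gt (hE : K.faces ∅) (f : V → ℝ) :
    K.faces (Finset.univ.filter fun v => tK K f < f v) := by
  by_contra hcon
  set σ : Finset V := Finset.univ.filter fun v => tK K f < f v with hσ
  have hσNF : σ ∈ NF K := mem_NF.2 hcon
  have hσne : σ.Nonempty := by
    rcases Finset.eq_empty_or_nonempty σ with h | h
    · rw [h] at hσNF; exact absurd hE (mem_NF.1 hσNF)
    · exact h
  obtain ⟨v, hv, hval⟩ := sInf_img_mem (f := f) hσne
  have h1 : sInf (f '' ↑σ) ≤ tK K f := le_tK hσNF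
  have h2 : tK K f < f v := by
    have := hv; rw [hσ] at this
    simpa using (Finset.mem_filter.1 this).2
  rw [hval] at h1
  linarith

theorem lip_gK (hNF : (NF K).Nonempty) (hne : ∀ τ ∈ NF K, τ.Nonempty) :
    Lip (gK K) := by
  refine Lip.pi fun v => ?_
  exact Lip.max ((lip_eval v).sub (lip_tK hNF hne)) (Lip.const 0)

theorem lip_SK (hNF : (NF K).Nonempty) (hne : ∀ τ ∈ NF K, τ.Nonempty) :
    Lip (SK K) := by
  refine Lip.finsetSum fun v _ => ?_
  exact Lip.max ((lip_eval v).sub (lip_tK hNF hne)) (Lip.const 0)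

theorem gK_nonneg (f : V → ℝ) (v : V) : 0 ≤ gK K f v := le_max_right _ _

theorem SK_nonneg (f : V → ℝ) : 0 ≤ SK K f :=
  Finset.sum_nonneg fun v _ => gK_nonneg f v

theorem gK_of_space (hNF : (NF K).Nonempty) (hne : ∀ τ ∈ NF K, τ.Nonempty)
    {f : V → ℝ} (h2 : ∀ v, 0 ≤ f v)
    (h3 : K.faces (Finset.univ.filter fun v => f v ≠ 0)) : gK K f = f := by
  funext v
  rw [gK, tK_eq_zero hNF hne h2 h3, sub_zero]
  exact max_eq_left (h2 v)

theorem SK_of_space (hNF : (NF K).Nonempty) (hne : ∀ τ ∈ NF K, τ.Nonempty)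
    {f : V → ℝ} (h1 : ∑ v, f v = 1) (h2 : ∀ v, 0 ≤ f v)
    (h3 : K.faces (Finset.univ.filter fun v => f v ≠ 0)) : SK K f = 1 := by
  rw [SK, gK_of_space hNF hne h2 h3] at *
  exact h1

theorem gK_ne_zero_iff (f : V → ℝ) (v : V) : gK K f v ≠ 0 ↔ tK K f < f v := by
  constructor
  · intro h
    by_contra hle
    push_neg at hle
    exact h (max_eq_right (by linarith))
  · intro h
    have : gK K f v = f v - tK K f := max_eq_left (by linarith)
    rw [this]
    linarith

/-- The normalized retraction lands in the space. -/
theorem rH_mem (hE : K.faces ∅) {f : V → ℝ} (hS : 0 < SK K f) :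
    (∑ v, ((SK K f)⁻¹ • gK K f) v = 1) ∧ (∀ v, 0 ≤ ((SK K f)⁻¹ • gK K f) v) ∧
      K.faces (Finset.univ.filter fun v => ((SK K f)⁻¹ • gK K f) v ≠ 0) := by
  have hSne : SK K f ≠ 0 := ne_of_gt hS
  refine ⟨?_, ?_, ?_⟩
  · simp only [Pi.smul_apply, smul_eq_mul]
    rw [← Finset.mul_sum]
    rw [← SK]
    field_simp
  · intro v
    simp only [Pi.smul_apply, smul_eq_mul]
    exact mul_nonneg (inv_nonneg.2 (le_of_lt hS)) (gK_nonneg f v)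
  · have heq : (Finset.univ.filter fun v => ((SK K f)⁻¹ • gK K f) v ≠ 0)
        = Finset.univ.filter fun v => tK K f < f v := by
      apply Finset.filter_congr
      intro v _
      simp only [Pi.smul_apply, smul_eq_mul]
      rw [mul_ne_zero_iff]
      constructor
      · rintro ⟨-, h⟩; exact (gK_ne_zero_iff f v).1 h
      · intro h; exact ⟨inv_ne_zero hSne, (gK_ne_zero_iff f v).2 h⟩
    rw [heq]
    exact face_gt hE f

theorem rH_id (hNF : (NF K).Nonempty) (hne : ∀ τ ∈ NF K, τ.Nonempty)
    {f : V → ℝ} (h1 : ∑ v, f v = 1) (h2 : ∀ v, 0 ≤ f v)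
    (h3 : K.faces (Finset.univ.filter fun v => f v ≠ 0)) :
    (SK K f)⁻¹ • gK K f = f := by
  rw [SK_of_space hNF hne h1 h2 h3, gK_of_space hNF hne h2 h3, inv_one, one_smul]

theorem SK_eq_zero_const (hNF : (NF K).Nonempty) (hne : ∀ τ ∈ NF K, τ.Nonempty)
    {f : V → ℝ} (h : SK K f = 0) : ∃ τ ∈ NF K, ∃ c : ℝ, ∀ v ∈ τ, f v = c := by
  have hall : ∀ v, gK K f v = 0 := by
    intro v
    have := (Finset.sum_eq_zero_iff_of_nonneg (fun v _ => gK_nonneg (K := K) f v)).1 h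
    exact this v (Finset.mem_univ v)
  have hle : ∀ v, f v ≤ tK K f := by
    intro v
    by_contra hcon
    push_neg at hcon
    exact (gK_ne_zero_iff f v).2 hcon (hall v)
  obtain ⟨τ, hτ, hval⟩ := tK_mem (f := f) hNF
  refine ⟨τ, hτ, tK K f, fun v hv => ?_⟩
  have h1 : tK K f ≤ f v := by rw [hval]; exact sInf_img_le hv
  exact le_antisymm (hle v) h1

theorem norm_le_one_of_space {f : V → ℝ} (h1 : ∑ v, f v = 1) (h2 : ∀ v, 0 ≤ f v) :
    ‖f‖ ≤ 1 := by
  rw [pi_norm_le_iff_of_nonneg zero_le_one]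
  intro v
  rw [Real.norm_eq_abs, abs_of_nonneg (h2 v)]
  calc f v ≤ ∑ u, f u := Finset.single_le_sum (fun u _ => h2 u) (Finset.mem_univ v)
  _ = 1 := h1

end CplxSec
/-! ### Cube functions -/

section CubeSec

open unitInterval

variable {i : ℕ}

/-- distance-to-boundary-like function on the cube -/
def dB (s : Fin i → I) : ℝ := ∏ j, (s j : ℝ) * (1 - (s j : ℝ))

theorem lip_coord (j : Fin i) : Lip (fun s : Fin i → I => (s j : ℝ)) := by
  refine lip_of_dist 1 zero_le_one fun a b => ?_
  have h1 : dist ((a j : ℝ)) ((b j : ℝ)) = dist (a j) (b j) := (Subtype.dist_eq _ _).symm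
  rw [h1, one_mul]
  exact dist_le_pi_dist a b j

theorem LB_coord (j : Fin i) : LB (fun s : Fin i → I => (s j : ℝ)) :=
  ⟨lip_coord j, 1, fun s => by
    rw [Real.norm_eq_abs, abs_of_nonneg (s j).2.1]; exact (s j).2.2⟩

theorem LB_dB : LB (dB (i := i)) := by
  refine LB.finsetProd fun j _ => ?_
  exact (LB_coord j).mul ((LB.const 1).sub (LB_coord j))

theorem dB_nonneg (s : Fin i → I) : 0 ≤ dB s :=
  Finset.prod_nonneg fun j _ => mul_nonneg (s j).2.1 (by linarith [(s j).2.2])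

theorem dB_eq_zero_iff (s : Fin i → I) : dB s = 0 ↔ s ∈ Cube.boundary (Fin i) := by
  rw [dB, Finset.prod_eq_zero_iff]
  constructor
  · rintro ⟨j, -, hj⟩
    rcases mul_eq_zero.1 hj with h | h
    · exact ⟨j, Or.inl (by ext; exact h)⟩
    · refine ⟨j, Or.inr ?_⟩
      refine Subtype.ext ?_
      rw [show ((1 : I) : ℝ) = 1 from rfl]
      linarith
  · rintro ⟨j, hj | hj⟩
    · exact ⟨j, Finset.mem_univ j, by rw [hj]; simp⟩
    · exact ⟨j, Finset.mem_univ j, by rw [hj]; simp⟩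

theorem dB_pos {s : Fin i → I} (h : s ∉ Cube.boundary (Fin i)) : 0 < dB s := by
  rcases lt_or_ge 0 (dB s) with hp | hl
  · exact hp
  · exact absurd ((dB_eq_zero_iff s).1 (le_antisymm hl (dB_nonneg s))) h

/-- clamp to `[0,1]` -/
def c01 (t : ℝ) : ℝ := Max.max 0 (Min.min 1 t)

theorem lip_c01 : Lip c01 :=
  (Lip.const (0:ℝ)).max ((Lip.const (1:ℝ)).min ⟨1, LipschitzWith.id⟩)

theorem c01_mem (t : ℝ) : 0 ≤ c01 t ∧ c01 t ≤ 1 :=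
  ⟨le_max_left _ _, max_le zero_le_one (min_le_left _ _)⟩

theorem LB_c01 : LB c01 :=
  ⟨lip_c01, 1, fun t => by
    rw [Real.norm_eq_abs, abs_of_nonneg (c01_mem t).1]; exact (c01_mem t).2⟩

theorem c01_coe (u : I) : c01 (u : ℝ) = (u : ℝ) := by
  rw [c01, min_eq_right u.2.2, max_eq_right u.2.1]

/-- clamp map from `ℝ^i` to the cube -/
def pQ (s : Fin i → ℝ) : Fin i → I := fun j => Set.projIcc (0:ℝ) 1 zero_le_one (s j)

theorem lip_pQ : ∃ C : NNReal, LipschitzWith C (pQ (i := i)) := by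
  refine ⟨1, LipschitzWith.of_dist_le_mul fun a b => ?_⟩
  rw [NNReal.coe_one, one_mul, dist_pi_le_iff dist_nonneg]
  intro j
  calc dist (pQ a j) (pQ b j) ≤ 1 * dist (a j) (b j) :=
        (LipschitzWith.projIcc zero_le_one).dist_le_mul (a j) (b j)
  _ ≤ dist a b := by rw [one_mul]; exact dist_le_pi_dist a b j

theorem pQ_coe (s : Fin i → I) : pQ (fun j => (s j : ℝ)) = s := by
  funext j
  simp only [pQ]
  exact Subtype.ext (by rw [Set.projIcc_of_mem zero_le_one (s j).2])

end CubeSec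

/-! ### Existence of a generic perturbation vector -/

theorem lip_fst {β : Type*} [PseudoMetricSpace β] {E₂ : Type*} [NormedAddCommGroup E₂] :
    Lip (fun p : E₂ × β => p.1) := ⟨1, LipschitzWith.prod_fst⟩

theorem lip_snd {β : Type*} [PseudoMetricSpace β] {E₂ : Type*} [NormedAddCommGroup E₂] :
    Lip (fun p : β × E₂ => p.2) := ⟨1, LipschitzWith.prod_snd⟩

open Classical in
/-- an element of a finset -/
def pick {V : Type} [Nonempty V] (τ : Finset V) : V :=
  if h : τ.Nonempty then h.choose else Classical.arbitrary V

theorem pick_mem {V : Type} [Nonempty V] {τ : Finset V} (h : τ.Nonempty) : pick τ ∈ τ := by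
  rw [pick, dif_pos h]
  exact h.choose_spec

section Avoid

variable {V : Type} [Fintype V] [DecidableEq V] [Nonempty V] {i : ℕ}

/-- parametrization of the bad set of perturbation vectors -/
def Gmap (Psi : (Fin i → ℝ) × ℝ → (V → ℝ)) (mu : (Fin i → ℝ) × ℝ → ℝ)
    (τ : Finset V) (m : ℕ) :
    (((Fin i → ℝ) × ℝ) × ℝ × ({v : V // v ∉ τ} → ℝ)) → (V → ℝ) := fun z v =>
  if h : v ∈ τ then
    z.2.1 + (Psi z.1 (pick τ) - Psi z.1 v) * (Max.max (mu z.1) (1/(m+1)))⁻¹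
  else z.2.2 ⟨v, h⟩

theorem lip_Gmap {Psi : (Fin i → ℝ) × ℝ → (V → ℝ)} {mu : (Fin i → ℝ) × ℝ → ℝ}
    (hPsi : LB Psi) (hmu : LB mu) (τ : Finset V) (m : ℕ) :
    Lip (Gmap Psi mu τ m) := by
  have hm1 : (0:ℝ) < 1/(m+1) := by positivity
  refine Lip.pi fun v => ?_
  by_cases h : v ∈ τ
  · simp only [Gmap, dif_pos h]
    have hfst : ∃ C : NNReal, LipschitzWith C
        (fun z : ((Fin i → ℝ) × ℝ) × ℝ × ({v : V // v ∉ τ} → ℝ) => z.1) :=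
      lip_fst
    have hPv : ∀ u : V, LB (fun z : ((Fin i → ℝ) × ℝ) × ℝ × ({v : V // v ∉ τ} → ℝ) =>
        Psi z.1 u) := by
      intro u
      obtain ⟨A, hA0, hA⟩ := hPsi.bound
      refine ⟨((lip_eval u).comp hPsi.lip).comp hfst, A, fun z => ?_⟩
      exact le_trans (norm_le_pi_norm (Psi z.1) u) (hA _)
    have hinv : LB (fun z : ((Fin i → ℝ) × ℝ) × ℝ × ({v : V // v ∉ τ} → ℝ) =>
        (Max.max (mu z.1) (1/(m+1)))⁻¹) := by
      refine ⟨(lip_invAbove hm1).comp (hmu.lip.comp hfst), (1/(m+1))⁻¹, fun z => ?_⟩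
      exact invAbove_bound hm1
    have hc : Lip (fun z : ((Fin i → ℝ) × ℝ) × ℝ × ({v : V // v ∉ τ} → ℝ) => z.2.1) :=
      lip_fst.comp lip_snd
    exact hc.add (((hPv (pick τ)).sub (hPv v)).mul hinv).lip
  · simp only [Gmap, dif_neg h]
    exact (lip_eval (⟨v, h⟩ : {u : V // u ∉ τ})).comp (lip_snd.comp lip_snd)

theorem exists_avoid {K : Cplx V} {k : ℕ} (hik : i + 2 ≤ k)
    (hcard : ∀ τ ∈ NF K, k + 1 ≤ τ.card)
    (hne : ∀ τ ∈ NF K, τ.Nonempty)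
    (Psi : (Fin i → ℝ) × ℝ → (V → ℝ)) (mu : (Fin i → ℝ) × ℝ → ℝ)
    (hPsi : LB Psi) (hmu : LB mu) :
    ∃ w : V → ℝ, ∀ q, 0 < mu q → ∀ τ ∈ NF K,
      ¬ ∃ c : ℝ, ∀ v ∈ τ, Psi q v + mu q * w v = c := by
  classical
  set n := Fintype.card V with hn
  have hn1 : 1 ≤ n := Fintype.card_pos
  set Bad : Set (V → ℝ) :=
    ⋃ τ ∈ (↑(NF K) : Set (Finset V)), ⋃ m : ℕ, Set.range (Gmap Psi mu τ m) with hBad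
  have hdim : ∀ τ ∈ NF K, ∀ m : ℕ,
      dimH (Set.range (Gmap Psi mu τ m)) ≤ ((n - 1 : ℕ) : ℝ≥0∞) := by
    intro τ hτ m
    obtain ⟨C, hC⟩ := lip_Gmap hPsi hmu τ m
    refine le_trans (hC.dimH_range_le) ?_
    rw [Real.dimH_univ_eq_finrank]
    have hfr : Module.finrank ℝ (((Fin i → ℝ) × ℝ) × ℝ × ({v : V // v ∉ τ} → ℝ))
        = (i + 1) + (1 + (n - τ.card)) := by
      simp [Module.finrank_prod, Module.finrank_self, Module.finrank_pi,
        Fintype.card_fin, Fintype.card_subtype_compl, Fintype.card_coe]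
      rfl
    rw [hfr]
    have harith : (i + 1) + (1 + (n - τ.card)) ≤ n - 1 := by
      have h1 := hcard τ hτ
      have h2 : τ.card ≤ n := Finset.card_le_univ τ
      omega
    exact_mod_cast harith
  have hdimBad : dimH Bad ≤ ((n - 1 : ℕ) : ℝ≥0∞) := by
    rw [hBad]
    rw [dimH_bUnion ((NF K).countable_toSet)]
    refine iSup₂_le fun τ hτ => ?_
    rw [dimH_iUnion]
    exact iSup_le fun m => hdim τ (by exact_mod_cast hτ) m
  have hlt : dimH Bad < Module.finrank ℝ (V → ℝ) := by
    rw [Module.finrank_pi]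
    refine lt_of_le_of_lt hdimBad ?_
    exact_mod_cast Nat.sub_lt hn1 one_pos
  obtain ⟨w, hw⟩ : ∃ w : V → ℝ, w ∉ Bad := by
    have hd := dense_compl_of_dimH_lt_finrank hlt
    obtain ⟨w, hw⟩ := hd.nonempty
    exact ⟨w, hw⟩
  refine ⟨w, fun q hq τ hτ hcon => ?_⟩
  obtain ⟨c, hc⟩ := hcon
  apply hw
  rw [hBad]
  refine Set.mem_biUnion (by exact_mod_cast hτ) ?_
  obtain ⟨m, hm⟩ := exists_nat_ge (1 / mu q)
  refine Set.mem_iUnion.2 ⟨m, ?_⟩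
  have hmum : 1/((m:ℝ)+1) ≤ mu q := by
    rw [div_le_iff₀ (by positivity)]
    rw [div_le_iff₀ hq] at hm
    nlinarith
  have hmax : Max.max (mu q) (1/((m:ℝ)+1)) = mu q := max_eq_left hmum
  refine ⟨(q, w (pick τ), fun u => w u.1), ?_⟩
  funext v
  by_cases h : v ∈ τ
  · simp only [Gmap, dif_pos h, hmax]
    have e1 := hc v h
    have e2 := hc (pick τ) (pick_mem (hne τ hτ))
    field_simp
    nlinarith [e1, e2]
  · simp only [Gmap, dif_neg h]

end Avoid

/-! ### The main contraction theorem -/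

theorem homotopic_const {V : Type} [Fintype V] [DecidableEq V] (K : Cplx V)
    (k i : ℕ) (Hk : ∀ sg : Finset V, sg.card ≤ k → K.faces sg) (hik : i + 2 ≤ k)
    (x : K.space) (γ : GenLoop (Fin i) K.space x) :
    GenLoop.Homotopic γ GenLoop.const := by
  classical
  have hE : K.faces ∅ := Hk ∅ (by simp)
  set γ' : (Fin i → unitInterval) → (V → ℝ) := fun s => (γ.1 s).1 with hγ'def
  have hγc : Continuous γ' := continuous_subtype_val.comp γ.1.continuous
  set xb : V → ℝ := x.1 with hxbdef
  have hγbd : ∀ s ∈ Cube.boundary (Fin i), γ' s = xb := fun s hs =>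
    congrArg Subtype.val (γ.2 s hs)
  have hsp : ∀ s, (∑ v, γ' s v = 1) ∧ (∀ v, 0 ≤ γ' s v) ∧
      K.faces (Finset.univ.filter fun v => γ' s v ≠ 0) := fun s => (γ.1 s).2
  have hxp : (∑ v, xb v = 1) ∧ (∀ v, 0 ≤ xb v) ∧
      K.faces (Finset.univ.filter fun v => xb v ≠ 0) := x.2
  have hcombo : ∀ (a : ℝ), 0 ≤ a → a ≤ 1 → ∀ f g : V → ℝ,
      (∑ v, f v = 1) → (∀ v, 0 ≤ f v) → (∑ v, g v = 1) → (∀ v, 0 ≤ g v) →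
      (∑ v, ((1-a) • f + a • g) v = 1) ∧ (∀ v, 0 ≤ ((1-a) • f + a • g) v) := by
    intro a ha0 ha1 f g hf1 hf2 hg1 hg2
    constructor
    · simp only [Pi.add_apply, Pi.smul_apply, smul_eq_mul]
      rw [Finset.sum_add_distrib, ← Finset.mul_sum, ← Finset.mul_sum, hf1, hg1]
      ring
    · intro v
      simp only [Pi.add_apply, Pi.smul_apply, smul_eq_mul]
      have := hf2 v; have := hg2 v
      nlinarith
  by_cases hNF : (NF K).Nonempty
  · -- main case : there are non-faces
    have hne : ∀ τ ∈ NF K, τ.Nonempty := by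
      intro τ hτ
      rcases Finset.eq_empty_or_nonempty τ with h | h
      · rw [h] at hτ; exact absurd hE (mem_NF.1 hτ)
      · exact h
    have hcard : ∀ τ ∈ NF K, k + 1 ≤ τ.card := by
      intro τ hτ
      by_contra h
      push_neg at h
      exact (mem_NF.1 hτ) (Hk τ (by omega))
    have hVne : Nonempty V := by
      by_contra h
      have : IsEmpty V := not_nonempty_iff.1 h
      have h1 := hxp.1
      rw [Finset.univ_eq_empty, Finset.sum_empty] at h1
      norm_num at h1
    obtain ⟨CS, hCS0, hCS⟩ := (lip_SK hNF hne).dist_le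
    set δ : ℝ := 1 / (4 * (CS + 1)) with hδdef
    have hδ0 : 0 < δ := by positivity
    have hnear : ∀ f g : V → ℝ, (∑ v, g v = 1) → (∀ v, 0 ≤ g v) →
        K.faces (Finset.univ.filter fun v => g v ≠ 0) → dist f g ≤ 2*δ →
        2⁻¹ ≤ SK K f := by
      intro f g h1 h2 h3 hd
      have hSg : SK K g = 1 := SK_of_space hNF hne h1 h2 h3
      have h4 := hCS f g
      have h5 : dist (SK K f) (SK K g) ≤ CS * (2*δ) :=
        le_trans h4 (mul_le_mul_of_nonneg_left hd hCS0)
      rw [Real.dist_eq, hSg] at h5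
      have hb : CS * (2*δ) ≤ 2⁻¹ := by
        rw [hδdef]
        rw [show CS * (2 * (1 / (4 * (CS + 1)))) = CS / (2*(CS+1)) by field_simp; ring]
        rw [div_le_iff₀ (by positivity)]
        nlinarith
      have := (abs_le.1 h5).1
      linarith
    -- Lipschitz approximation of the loop
    have happrox : ∀ v : V, ∃ h : (Fin i → unitInterval) → ℝ,
        Lip h ∧ ∀ s, |h s - γ' s v| ≤ δ/2 := by
      intro v
      exact lip_approx _ ((continuous_apply v).comp hγc) (by positivity)
    choose Fap hF1 hF2 using happrox
    set φ : (Fin i → unitInterval) → V → ℝ := fun s v => Fap v s with hφdef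
    have hφlip : Lip φ := Lip.pi fun v => hF1 v
    have hφcl : ∀ s, dist (φ s) (γ' s) ≤ δ/2 := by
      intro s
      rw [dist_pi_le_iff (by positivity)]
      intro v
      rw [Real.dist_eq]
      exact hF2 v s
    have hφLB : LB φ := by
      refine ⟨hφlip, 1 + δ/2, fun s => ?_⟩
      have h1 : φ s = γ' s + (φ s - γ' s) := by abel
      rw [h1]
      refine le_trans (norm_add_le _ _) ?_
      have h2 := hφcl s
      rw [dist_eq_norm] at h2
      have h3 := norm_le_one_of_space (hsp s).1 (hsp s).2.1
      linarith
    -- collar radius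
    obtain ⟨ρ, hρ0, hρ⟩ : ∃ ρ : ℝ, 0 < ρ ∧ ∀ s, dB s < ρ → dist (γ' s) xb ≤ δ/2 := by
      set Kc : Set (Fin i → unitInterval) := {s | δ/2 ≤ dist (γ' s) xb} with hKcdef
      have hKcc : IsClosed Kc := isClosed_le continuous_const (hγc.dist continuous_const)
      rcases Set.eq_empty_or_nonempty Kc with hem | hnem
      · refine ⟨1, one_pos, fun s _ => ?_⟩
        have hni : s ∉ Kc := by rw [hem]; exact Set.notMem_empty s
        simp only [hKcdef] at hni
        simp only [Set.mem_setOf_eq, not_le] at hni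
        linarith
      · obtain ⟨s₀, hs₀K, hmin⟩ :=
          hKcc.isCompact.exists_isMinOn hnem (LB_dB.lip.continuous.continuousOn)
        refine ⟨dB s₀, ?_, ?_⟩
        · refine dB_pos fun hbd => ?_
          have h1 : γ' s₀ = xb := hγbd s₀ hbd
          have h2 : δ/2 ≤ dist (γ' s₀) xb := hs₀K
          rw [h1] at h2
          rw [_root_.dist_self] at h2
          linarith
        · intro s hlt
          by_contra hcon
          push_neg at hcon
          have hsK : s ∈ Kc := le_of_lt hcon
          exact absurd (hmin hsK) (not_le.2 hlt)
    set lam : (Fin i → unitInterval) → ℝ := fun s => Max.max 0 (1 - dB s * ρ⁻¹) with hlamdef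
    have hlam01 : ∀ s, 0 ≤ lam s ∧ lam s ≤ 1 := by
      intro s
      refine ⟨le_max_left _ _, max_le zero_le_one ?_⟩
      have h1 := dB_nonneg s
      have h2 : 0 ≤ dB s * ρ⁻¹ := by positivity
      linarith
    have hlamLB : LB lam := by
      refine ⟨(Lip.const 0).max ((Lip.const 1).sub (LB_dB.mul (LB.const ρ⁻¹)).lip), 1,
        fun s => ?_⟩
      rw [Real.norm_eq_abs, abs_of_nonneg (hlam01 s).1]
      exact (hlam01 s).2
    have hlam1 : ∀ s, dB s = 0 → lam s = 1 := by
      intro s h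
      simp only [hlamdef]
      simp only [h, zero_mul, sub_zero]
      norm_num
    have hlampos : ∀ s, 0 < lam s → dB s < ρ := by
      intro s h
      by_contra hc
      push_neg at hc
      have h1 : (1:ℝ) ≤ dB s * ρ⁻¹ := by
        rw [← div_eq_mul_inv]
        exact (one_le_div hρ0).2 hc
      have h2 : lam s = 0 := max_eq_left (by linarith)
      linarith
    set φ2 : (Fin i → unitInterval) → V → ℝ := fun s => (1 - lam s) • φ s + lam s • xb
      with hφ2def
    have hφ2LB : LB φ2 := (((LB.const 1).sub hlamLB).smul hφLB).add (hlamLB.smul (LB.const xb))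
    have hφ2cl : ∀ s, dist (φ2 s) (γ' s) ≤ δ := by
      intro s
      rw [dist_eq_norm]
      have hid : φ2 s - γ' s = (1 - lam s) • (φ s - γ' s) + lam s • (xb - γ' s) := by
        simp only [hφ2def]
        simp only [smul_sub, sub_smul, one_smul]
        abel
      rw [hid]
      have h1 : ‖(1 - lam s) • (φ s - γ' s)‖ ≤ δ/2 := by
        rw [norm_smul, Real.norm_eq_abs, abs_of_nonneg (by linarith [(hlam01 s).2] : (0:ℝ) ≤ 1 - lam s)]
        have h2 := hφcl s
        rw [dist_eq_norm] at h2
        nlinarith [(hlam01 s).1, norm_nonneg (φ s - γ' s)]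
      have h2 : ‖lam s • (xb - γ' s)‖ ≤ δ/2 := by
        rcases eq_or_lt_of_le (hlam01 s).1 with h | h
        · rw [← h, zero_smul, norm_zero]
          positivity
        · rw [norm_smul, Real.norm_eq_abs, abs_of_nonneg (hlam01 s).1]
          have hd := hρ s (hlampos s h)
          rw [_root_.dist_comm, dist_eq_norm] at hd
          nlinarith [(hlam01 s).2, norm_nonneg (xb - γ' s)]
      exact le_trans (norm_add_le _ _) (by linarith)
    have hφ2bd : ∀ s, dB s = 0 → φ2 s = xb := by
      intro s h
      simp only [hφ2def, hlam1 s h]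
      simp
    -- the retraction
    set nrm : (V → ℝ) → V → ℝ := fun f => (Max.max (SK K f) 2⁻¹)⁻¹ • gK K f with hnrmdef
    have hnrmeq : ∀ f, 2⁻¹ ≤ SK K f → nrm f = (SK K f)⁻¹ • gK K f := by
      intro f h
      simp only [hnrmdef]
      rw [max_eq_left h]
    have hnrmid : ∀ f, (∑ v, f v = 1) → (∀ v, 0 ≤ f v) →
        K.faces (Finset.univ.filter fun v => f v ≠ 0) → nrm f = f := by
      intro f h1 h2 h3
      rw [hnrmeq f (by rw [SK_of_space hNF hne h1 h2 h3]; norm_num)]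
      exact rH_id hNF hne h1 h2 h3
    have hnrmmem : ∀ f, 2⁻¹ ≤ SK K f → (∑ v, nrm f v = 1) ∧ (∀ v, 0 ≤ nrm f v) ∧
        K.faces (Finset.univ.filter fun v => nrm f v ≠ 0) := by
      intro f h
      have hmem := rH_mem hE (K := K) (f := f) (by linarith)
      rw [← hnrmeq f h] at hmem
      exact hmem
    have hnrmcont : Continuous nrm := by
      have hSc : Continuous (SK K) := (lip_SK hNF hne).continuous
      have hgc : Continuous (gK K) := (lip_gK hNF hne).continuous
      refine Continuous.smul (Continuous.inv₀ (hSc.max continuous_const) ?_) hgc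
      intro f
      have h1 : (2⁻¹:ℝ) ≤ Max.max (SK K f) 2⁻¹ := le_max_right _ _
      have : (0:ℝ) < Max.max (SK K f) 2⁻¹ := lt_of_lt_of_le (by norm_num) h1
      exact ne_of_gt this
    -- the Lipschitz loop
    set gmt : (Fin i → unitInterval) → V → ℝ := fun s => nrm (φ2 s) with hgmtdef
    have hSφ2 : ∀ s, 2⁻¹ ≤ SK K (φ2 s) := fun s =>
      hnear (φ2 s) (γ' s) (hsp s).1 (hsp s).2.1 (hsp s).2.2 (by linarith [hφ2cl s])
    have hgmtmem : ∀ s, (∑ v, gmt s v = 1) ∧ (∀ v, 0 ≤ gmt s v) ∧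
        K.faces (Finset.univ.filter fun v => gmt s v ≠ 0) := fun s => hnrmmem _ (hSφ2 s)
    have hgmtlip : Lip gmt := by
      have h1 : LB (fun s => (Max.max (SK K (φ2 s)) 2⁻¹)⁻¹) := by
        refine ⟨(lip_invAbove (by norm_num : (0:ℝ) < 2⁻¹)).comp
          ((lip_SK hNF hne).comp hφ2LB.lip), 2, fun s => ?_⟩
        exact le_trans (invAbove_bound (by norm_num)) (by norm_num)
      have h2 : LB (fun s => gK K (φ2 s)) := Lip.comp_LB (lip_gK hNF hne) hφ2LB
      exact (h1.smul h2).lip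
    have hgmtbd : ∀ s, dB s = 0 → gmt s = xb := by
      intro s h
      simp only [hgmtdef]
      rw [hφ2bd s h]
      exact hnrmid xb hxp.1 hxp.2.1 hxp.2.2
    have hgmtnorm : ∀ s, ‖gmt s‖ ≤ 1 := fun s =>
      norm_le_one_of_space (hgmtmem s).1 (hgmtmem s).2.1
    set gtl : GenLoop (Fin i) K.space x :=
      ⟨⟨fun s => ⟨gmt s, hgmtmem s⟩, hgmtlip.continuous.subtype_mk _⟩,
        fun s hs => Subtype.ext (hgmtbd s ((dB_eq_zero_iff s).2 hs))⟩ with hgtldef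
    -- first homotopy : γ to gtl
    have hH1 : GenLoop.Homotopic γ gtl := by
      refine ⟨⟨⟨⟨fun p => ⟨nrm ((1 - (p.1:ℝ)) • γ' p.2 + (p.1:ℝ) • φ2 p.2), ?_⟩, ?_⟩,
        ?_, ?_⟩, ?_⟩⟩
      · refine hnrmmem _ (hnear _ (γ' p.2) (hsp p.2).1 (hsp p.2).2.1 (hsp p.2).2.2 ?_)
        have hid : (1 - (p.1:ℝ)) • γ' p.2 + (p.1:ℝ) • φ2 p.2 - γ' p.2
            = (p.1:ℝ) • (φ2 p.2 - γ' p.2) := by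
          simp only [sub_smul, smul_sub, one_smul]
          abel
        rw [dist_eq_norm, hid, norm_smul, Real.norm_eq_abs, abs_of_nonneg p.1.2.1]
        have h2 := hφ2cl p.2
        rw [dist_eq_norm] at h2
        nlinarith [p.1.2.2, norm_nonneg (φ2 p.2 - γ' p.2), hδ0]
      · refine Continuous.subtype_mk ?_ _
        have hc1 : Continuous fun p : unitInterval × (Fin i → unitInterval) => (p.1 : ℝ) :=
          continuous_subtype_val.comp continuous_fst
        exact hnrmcont.comp (((continuous_const.sub hc1).smul (hγc.comp continuous_snd)).add
          (hc1.smul (hφ2LB.lip.continuous.comp continuous_snd)))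
      · intro s
        refine Subtype.ext ?_
        show nrm ((1 - ((0:unitInterval):ℝ)) • γ' s + ((0:unitInterval):ℝ) • φ2 s) = γ' s
        have e : (1 - ((0:unitInterval):ℝ)) • γ' s + ((0:unitInterval):ℝ) • φ2 s = γ' s := by
          rw [show ((0:unitInterval):ℝ) = 0 from rfl]
          norm_num
        calc nrm ((1 - ((0:unitInterval):ℝ)) • γ' s + ((0:unitInterval):ℝ) • φ2 s)
            = nrm (γ' s) := by rw [e]
        _ = γ' s := hnrmid _ (hsp s).1 (hsp s).2.1 (hsp s).2.2
      · intro s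
        refine Subtype.ext ?_
        show nrm ((1 - ((1:unitInterval):ℝ)) • γ' s + ((1:unitInterval):ℝ) • φ2 s) = gmt s
        have e : (1 - ((1:unitInterval):ℝ)) • γ' s + ((1:unitInterval):ℝ) • φ2 s = φ2 s := by
          rw [show ((1:unitInterval):ℝ) = 1 from rfl]
          norm_num
        calc nrm ((1 - ((1:unitInterval):ℝ)) • γ' s + ((1:unitInterval):ℝ) • φ2 s)
            = nrm (φ2 s) := by rw [e]
        _ = gmt s := rfl
      · intro t s hs
        refine Subtype.ext ?_
        show nrm ((1 - (t:ℝ)) • γ' s + (t:ℝ) • φ2 s) = γ' s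
        have hb : dB s = 0 := (dB_eq_zero_iff s).2 hs
        have e : (1 - (t:ℝ)) • γ' s + (t:ℝ) • φ2 s = xb := by
          rw [hγbd s hs, hφ2bd s hb, ← add_smul]
          rw [show (1 - (t:ℝ)) + (t:ℝ) = 1 by ring, one_smul]
        calc nrm ((1 - (t:ℝ)) • γ' s + (t:ℝ) • φ2 s) = nrm xb := by rw [e]
        _ = xb := hnrmid xb hxp.1 hxp.2.1 hxp.2.2
        _ = γ' s := (hγbd s hs).symm
    -- second stage data
    set Psi : (Fin i → ℝ) × ℝ → V → ℝ :=
      fun q => (1 - c01 q.2) • gmt (pQ q.1) + c01 q.2 • xb with hPsidef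
    set mu : (Fin i → ℝ) × ℝ → ℝ :=
      fun q => dB (pQ q.1) * (c01 q.2 * (1 - c01 q.2)) with hmudef
    have hpQfst : ∃ C : NNReal, LipschitzWith C
        (fun q : (Fin i → ℝ) × ℝ => pQ q.1) := by
      obtain ⟨C, hC⟩ := lip_pQ (i := i)
      exact ⟨C * 1, hC.comp LipschitzWith.prod_fst⟩
    have hgmtq : LB (fun q : (Fin i → ℝ) × ℝ => gmt (pQ q.1)) :=
      ⟨hgmtlip.comp hpQfst, 1, fun q => hgmtnorm _⟩
    have hc01q : LB (fun q : (Fin i → ℝ) × ℝ => c01 q.2) := by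
      refine ⟨lip_c01.comp ⟨1, LipschitzWith.prod_snd⟩, 1, fun q => ?_⟩
      rw [Real.norm_eq_abs, abs_of_nonneg (c01_mem _).1]
      exact (c01_mem _).2
    have hPsiLB : LB Psi := (((LB.const 1).sub hc01q).smul hgmtq).add (hc01q.smul (LB.const xb))
    have hdBq : LB (fun q : (Fin i → ℝ) × ℝ => dB (pQ q.1)) := by
      obtain ⟨A, hA0, hA⟩ := (LB_dB (i := i)).bound
      exact ⟨LB_dB.lip.comp hpQfst, A, fun q => hA _⟩
    have hmuLB : LB mu := hdBq.mul (hc01q.mul ((LB.const 1).sub hc01q))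
    have hmunn : ∀ q, 0 ≤ mu q := fun q =>
      mul_nonneg (dB_nonneg _) (mul_nonneg (c01_mem _).1 (by linarith [(c01_mem q.2).2]))
    obtain ⟨w, hw⟩ := exists_avoid (K := K) hik hcard hne Psi mu hPsiLB hmuLB
    -- the embedded cone map
    set emb : unitInterval × (Fin i → unitInterval) → (Fin i → ℝ) × ℝ :=
      fun p => (fun j => ((p.2 j : ℝ)), (p.1:ℝ)) with hembdef
    have hembc : Continuous emb := by
      refine Continuous.prodMk ?_ (continuous_subtype_val.comp continuous_fst)
      exact continuous_pi fun j =>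
        continuous_subtype_val.comp ((continuous_apply j).comp continuous_snd)
    have hembP : ∀ p, Psi (emb p) = (1 - (p.1:ℝ)) • gmt p.2 + (p.1:ℝ) • xb := by
      intro p
      simp only [hPsidef]
      show (1 - c01 ((p.1:ℝ))) • gmt (pQ (fun j => ((p.2 j : ℝ)))) + c01 ((p.1:ℝ)) • xb = _
      rw [pQ_coe, c01_coe]
    have hembmu : ∀ p, mu (emb p) = dB p.2 * ((p.1:ℝ) * (1 - (p.1:ℝ))) := by
      intro p
      simp only [hmudef]
      show dB (pQ (fun j => ((p.2 j : ℝ)))) * (c01 ((p.1:ℝ)) * (1 - c01 ((p.1:ℝ)))) = _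
      rw [pQ_coe, c01_coe]
    set psi : unitInterval × (Fin i → unitInterval) → V → ℝ :=
      fun p => Psi (emb p) + mu (emb p) • w with hpsidef
    have hpsic : Continuous psi :=
      ((hPsiLB.lip.continuous.comp hembc)).add
        ((hmuLB.lip.continuous.comp hembc).smul continuous_const)
    have hSpsi : ∀ p, 0 < SK K (psi p) := by
      intro p
      rcases eq_or_lt_of_le (hmunn (emb p)) with h0 | hpos
      · have hpsip : psi p = Psi (emb p) := by
          simp only [hpsidef]
          simp only [← h0, zero_smul, add_zero]
        have hfacts : Psi (emb p) = gmt p.2 ∨ Psi (emb p) = xb := by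
          have hz := h0.symm
          rw [hembmu p] at hz
          rcases mul_eq_zero.1 hz with hz1 | hz2
          · right
            rw [hembP p, hgmtbd p.2 hz1, ← add_smul]
            rw [show (1 - ((p.1:unitInterval):ℝ)) + ((p.1:unitInterval):ℝ) = 1 by ring, one_smul]
          · rcases mul_eq_zero.1 hz2 with hz3 | hz4
            · left
              rw [hembP p, hz3]
              norm_num
            · right
              have hu1 : ((p.1:unitInterval):ℝ) = 1 := by linarith [sub_eq_zero.1 hz4]
              rw [hembP p, hu1]
              norm_num
        rw [hpsip]
        rcases hfacts with hcase | hcase <;> rw [hcase]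
        · rw [SK_of_space hNF hne (hgmtmem p.2).1 (hgmtmem p.2).2.1 (hgmtmem p.2).2.2]
          norm_num
        · rw [SK_of_space hNF hne hxp.1 hxp.2.1 hxp.2.2]
          norm_num
      · by_contra hc
        have hSz : SK K (psi p) = 0 := le_antisymm (not_lt.1 hc) (SK_nonneg _)
        obtain ⟨τ, hτ, c, hcc⟩ := SK_eq_zero_const hNF hne hSz
        refine hw (emb p) hpos τ hτ ⟨c, fun v hv => ?_⟩
        have := hcc v hv
        simp only [hpsidef] at this
        simpa [Pi.add_apply, Pi.smul_apply, smul_eq_mul] using this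
    -- second homotopy : gtl to const
    have hH2 : GenLoop.Homotopic gtl (GenLoop.const) := by
      refine ⟨⟨⟨⟨fun p => ⟨(SK K (psi p))⁻¹ • gK K (psi p), rH_mem hE (hSpsi p)⟩, ?_⟩,
        ?_, ?_⟩, ?_⟩⟩
      · refine Continuous.subtype_mk ?_ _
        have hSc : Continuous (SK K) := (lip_SK hNF hne).continuous
        have hgc : Continuous (gK K) := (lip_gK hNF hne).continuous
        exact (Continuous.inv₀ (hSc.comp hpsic) (fun p => ne_of_gt (hSpsi p))).smul
          (hgc.comp hpsic)
      · intro s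
        refine Subtype.ext ?_
        show (SK K (psi (0, s)))⁻¹ • gK K (psi (0, s)) = gmt s
        have hmu0 : mu (emb (0, s)) = 0 := by
          rw [hembmu]
          rw [show (((0:unitInterval)):ℝ) = 0 from rfl]
          ring
        have hpsiv : psi (0, s) = gmt s := by
          simp only [hpsidef]
          simp only [hmu0, zero_smul, add_zero]
          rw [hembP]
          rw [show (((0:unitInterval)):ℝ) = 0 from rfl]
          norm_num
        rw [hpsiv]
        exact rH_id hNF hne (hgmtmem s).1 (hgmtmem s).2.1 (hgmtmem s).2.2
      · intro s
        refine Subtype.ext ?_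
        show (SK K (psi (1, s)))⁻¹ • gK K (psi (1, s)) = xb
        have hmu0 : mu (emb (1, s)) = 0 := by
          rw [hembmu]
          rw [show (((1:unitInterval)):ℝ) = 1 from rfl]
          ring
        have hpsiv : psi (1, s) = xb := by
          simp only [hpsidef]
          simp only [hmu0, zero_smul, add_zero]
          rw [hembP]
          rw [show (((1:unitInterval)):ℝ) = 1 from rfl]
          norm_num
        rw [hpsiv]
        exact rH_id hNF hne hxp.1 hxp.2.1 hxp.2.2
      · intro t s hs
        refine Subtype.ext ?_
        show (SK K (psi (t, s)))⁻¹ • gK K (psi (t, s)) = gmt s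
        have hb : dB s = 0 := (dB_eq_zero_iff s).2 hs
        have hmu0 : mu (emb (t, s)) = 0 := by
          rw [hembmu]
          simp [hb]
        have hpsiv : psi (t, s) = xb := by
          simp only [hpsidef]
          simp only [hmu0, zero_smul, add_zero]
          rw [hembP]
          simp only
          rw [hgmtbd s hb, ← add_smul]
          rw [show (1 - (t:ℝ)) + (t:ℝ) = 1 by ring, one_smul]
        rw [hpsiv]
        rw [rH_id hNF hne hxp.1 hxp.2.1 hxp.2.2]
        exact (hgmtbd s hb).symm
    exact hH1.trans hH2

  · -- all finsets are faces : direct convex contraction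
    have hface : ∀ τ : Finset V, K.faces τ := by
      intro τ
      by_contra h
      exact hNF ⟨τ, mem_NF.2 h⟩
    refine ⟨⟨⟨⟨fun p => ⟨(1 - (p.1:ℝ)) • γ' p.2 + (p.1:ℝ) • xb, ?_⟩, ?_⟩, ?_, ?_⟩, ?_⟩⟩
    · obtain ⟨h1, h2⟩ := hcombo (p.1:ℝ) p.1.2.1 p.1.2.2 (γ' p.2) xb (hsp p.2).1
        (hsp p.2).2.1 hxp.1 hxp.2.1
      exact ⟨h1, h2, hface _⟩
    · refine Continuous.subtype_mk ?_ _
      have hc1 : Continuous fun p : unitInterval × (Fin i → unitInterval) => (p.1 : ℝ) :=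
        continuous_subtype_val.comp continuous_fst
      exact ((continuous_const.sub hc1).smul (hγc.comp continuous_snd)).add
        (hc1.smul continuous_const)
    · intro s
      refine Subtype.ext ?_
      show (1 - ((0:unitInterval):ℝ)) • γ' s + ((0:unitInterval):ℝ) • xb = γ' s
      norm_num
    · intro s
      refine Subtype.ext ?_
      show (1 - ((1:unitInterval):ℝ)) • γ' s + ((1:unitInterval):ℝ) • xb = xb
      norm_num
    · intro t s hs
      refine Subtype.ext ?_
      show (1 - (t:ℝ)) • γ' s + (t:ℝ) • xb = γ' s
      rw [hγbd s hs, ← add_smul]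
      norm_num

end DomConn
end

/-- Proposition 5.10: if `k` is the minimum degree of `G`, then the dominance complex
of `G` is `(k-2)`-connected, i.e. `π_i(D(G))` is trivial for all `0 ≤ i ≤ k - 2`. -/
theorem dominance_connected_of_minDegree {V : Type} [Fintype V] [DecidableEq V]
    (G : SimpleGraph V) [DecidableRel G.Adj] (k : ℕ) (hk : G.minDegree = k) :
    ∀ (x : (domCpx G).space) (i : ℕ), (i : ℤ) ≤ (k : ℤ) - 2 →
      Subsingleton (HomotopyGroup (Fin i) (domCpx G).space x) := by
  intro x i hi
  have hik : i + 2 ≤ k := by omega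
  have Hk : ∀ sg : Finset V, sg.card ≤ k → (domCpx G).faces sg := by
    intro sg hcard v
    have hv : Nonempty V := ⟨v⟩
    set T : Finset V := insert v (G.neighborFinset v) with hT
    have hTcard : k + 1 ≤ T.card := by
      rw [hT, Finset.card_insert_of_notMem (by simp [SimpleGraph.mem_neighborFinset])]
      have h1 : G.minDegree ≤ G.degree v := G.minDegree_le_degree v
      rw [hk] at h1
      rw [SimpleGraph.card_neighborFinset_eq_degree]
      omega
    have hnsub : ¬ T ⊆ sg := fun hsub => by
      have := Finset.card_le_card hsub
      omega
    obtain ⟨w, hwT, hwn⟩ := Finset.not_subset.1 hnsub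
    refine ⟨w, hwn, ?_⟩
    rw [hT, Finset.mem_insert] at hwT
    rcases hwT with h | h
    · exact Or.inl h
    · exact Or.inr ((SimpleGraph.mem_neighborFinset G v w).1 h).symm
  constructor
  intro a b
  refine Quotient.inductionOn₂ a b fun f g => Quotient.sound ?_
  exact (DomConn.homotopic_const (domCpx G) k i Hk hik x f).trans
    (DomConn.homotopic_const (domCpx G) k i Hk hik x g).symm
end
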